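/- arXiv:1309.0998 — 6 statements merged into one kernel-verified Lean document; each statement's English description precedes it below -/
import Mathlib

section
/- Let B be a finite-dimensional algebra over k = F_q of global dimension at most 2, and let A1, A2 be finite-dimensional right B-modules with minimal projective resolutions 0 → P2 →(a2) P1 →(a1) P0 →(a0) A1 → 0 and 0 → Q2 →(b2) Q1 →(b1) Q0 →(b0) A2 → 0, and associated 2-periodic complexes C_{A1}, C_{A2}. Then: (i) every morphism of 2-periodic complexes C_{A1} → C_{A2}, written as a pair (h : P1 → Q1, matrix (a b; c d) : P0 ⊕ P2 → Q0 ⊕ Q2), satisfies c = 0, and the triple (d, h, a) is a chain map between the two resolutions, hence induces a unique B-module homomorphism f : A1 → A2; (ii) the resulting k-linear map φ : Hom_{C_2(mod B)}(C_{A1}, C_{A2}) → Hom_B(A1, A2) is surjective. -/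
open Function

/-- A submodule `N` of `M` is superfluous if `N ⊔ X = ⊤` implies `X = ⊤`
for every submodule `X`. -/
def Superfluous {B M : Type} [Ring B] [AddCommGroup M] [Module Bᵐᵒᵖ M]
    (N : Submodule Bᵐᵒᵖ M) : Prop :=
  ∀ X : Submodule Bᵐᵒᵖ M, N ⊔ X = ⊤ → X = ⊤

/-- The (right) global dimension of `B` is at most `n`: every right `B`-module admits
a projective resolution vanishing in degrees `> n`. -/
def GlobalDimLE (B : Type) [Ring B] (n : ℕ) : Prop :=
  ∀ M : ModuleCat.{0} Bᵐᵒᵖ, ∃ (P : ℕ → ModuleCat.{0} Bᵐᵒᵖ)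
    (d : ∀ i, P (i + 1) →ₗ[Bᵐᵒᵖ] P i) (e : P 0 →ₗ[Bᵐᵒᵖ] M),
    (∀ i, Module.Projective Bᵐᵒᵖ (P i)) ∧ Surjective e ∧
    LinearMap.range (d 0) = LinearMap.ker e ∧
    (∀ i, LinearMap.range (d (i + 1)) = LinearMap.ker (d i)) ∧
    (∀ i, n < i → Subsingleton (P i))

/-- A 2-periodic (ℤ/2-graded) complex of right `B`-modules: a pair of maps
`d1 : M1 → M0` and `d0 : M0 → M1` with `d0 ∘ d1 = 0` and `d1 ∘ d0 = 0`. -/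
structure Cplx2 (B : Type) [Ring B] : Type 1 where
  X1 : ModuleCat.{0} Bᵐᵒᵖ
  X0 : ModuleCat.{0} Bᵐᵒᵖ
  d1 : X1 →ₗ[Bᵐᵒᵖ] X0
  d0 : X0 →ₗ[Bᵐᵒᵖ] X1
  h01 : ∀ x, d0 (d1 x) = 0
  h10 : ∀ x, d1 (d0 x) = 0

namespace Cplx2

variable {B : Type} [Ring B]

/-- Morphisms of 2-periodic complexes: pairs of linear maps commuting with the
differentials; they form an additive subgroup of the product of hom groups. -/
def homSet (C D : Cplx2 B) :
    AddSubgroup ((C.X1 →ₗ[Bᵐᵒᵖ] D.X1) × (C.X0 →ₗ[Bᵐᵒᵖ] D.X0)) where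
  carrier := {s | (∀ x, D.d1 (s.1 x) = s.2 (C.d1 x)) ∧ (∀ x, D.d0 (s.2 x) = s.1 (C.d0 x))}
  add_mem' := fun ha hb =>
    ⟨fun x => by simp [ha.1 x, hb.1 x], fun x => by simp [ha.2 x, hb.2 x]⟩
  zero_mem' := ⟨fun x => by simp, fun x => by simp⟩
  neg_mem' := fun ha => ⟨fun x => by simp [ha.1 x], fun x => by simp [ha.2 x]⟩

/-- The type of morphisms of 2-periodic complexes. -/
abbrev Hom (C D : Cplx2 B) : Type := C.homSet D

/-- Composition of morphisms of 2-periodic complexes. -/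
def Hom.comp {C D E : Cplx2 B} (g : D.Hom E) (f : C.Hom D) : C.Hom E :=
  ⟨(g.val.1 ∘ₗ f.val.1, g.val.2 ∘ₗ f.val.2),
    ⟨fun x => by simp [g.prop.1, f.prop.1], fun x => by simp [g.prop.2, f.prop.2]⟩⟩

/-- The identity morphism of a 2-periodic complex. -/
def Hom.id (C : Cplx2 B) : C.Hom C :=
  ⟨(LinearMap.id, LinearMap.id), ⟨fun _ => rfl, fun _ => rfl⟩⟩

/-- Two 2-periodic complexes are isomorphic (in the abelian category `C_2(mod B)`). -/
def Iso (C D : Cplx2 B) : Prop :=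
  ∃ f : C.Hom D, Bijective f.val.1 ∧ Bijective f.val.2

/-- Direct sum of two 2-periodic complexes. -/
def dsum (C D : Cplx2 B) : Cplx2 B where
  X1 := ModuleCat.of Bᵐᵒᵖ (C.X1 × D.X1)
  X0 := ModuleCat.of Bᵐᵒᵖ (C.X0 × D.X0)
  d1 := C.d1.prodMap D.d1
  d0 := C.d0.prodMap D.d0
  h01 := fun x => Prod.ext (C.h01 x.1) (D.h01 x.2)
  h10 := fun x => Prod.ext (C.h10 x.1) (D.h10 x.2)

/-- The shift (involution `*`) of a 2-periodic complex: components interchanged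
and differentials negated. -/
def shift (C : Cplx2 B) : Cplx2 B where
  X1 := C.X0
  X0 := C.X1
  d1 := -C.d0
  d0 := -C.d1
  h01 := fun x => by simp [C.h10]
  h10 := fun x => by simp [C.h01]

/-- The degree `0` homology `H_0 = ker d0 / im d1` of a 2-periodic complex. -/
abbrev H0 (C : Cplx2 B) :=
  (LinearMap.ker C.d0) ⧸ ((LinearMap.range C.d1).comap (LinearMap.ker C.d0).subtype)

/-- A 2-periodic complex is acyclic if `H_0` and `H_1` both vanish. -/
def Acyclic (C : Cplx2 B) : Prop :=
  LinearMap.range C.d1 = LinearMap.ker C.d0 ∧ LinearMap.range C.d0 = LinearMap.ker C.d1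

/-- Both components are projective modules. -/
def Proj (C : Cplx2 B) : Prop :=
  Module.Projective Bᵐᵒᵖ C.X1 ∧ Module.Projective Bᵐᵒᵖ C.X0

/-- Both components are finitely generated (equivalently, finite-dimensional over `k`). -/
def FinDim (C : Cplx2 B) : Prop :=
  Module.Finite Bᵐᵒᵖ C.X1 ∧ Module.Finite Bᵐᵒᵖ C.X0

end Cplx2

/-- The acyclic 2-periodic complex `K_P`: both components `P`, `d1 = id`, `d0 = 0`. -/
def KP {B : Type} [Ring B] (P : ModuleCat.{0} Bᵐᵒᵖ) : Cplx2 B :=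
  ⟨P, P, LinearMap.id, 0, fun x => by simp, fun x => by simp⟩

/-- The acyclic 2-periodic complex `K_P^*`: both components `P`, `d1 = 0`, `d0 = id`. -/
def KPs {B : Type} [Ring B] (P : ModuleCat.{0} Bᵐᵒᵖ) : Cplx2 B :=
  ⟨P, P, 0, LinearMap.id, fun x => by simp, fun _ => rfl⟩

/-- The 2-periodic complex `C_A` associated to a projective resolution
`0 → P2 →(a2) P1 →(a1) P0 →(a0) A → 0`, namely `P1 ⇄ P0 ⊕ P2` with
`d1 : x ↦ (a1 x, 0)` and `d0 : (u, v) ↦ a2 v`. -/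
def CA {B : Type} [Ring B] {P0 P1 P2 : Type}
    [AddCommGroup P0] [Module Bᵐᵒᵖ P0] [AddCommGroup P1] [Module Bᵐᵒᵖ P1]
    [AddCommGroup P2] [Module Bᵐᵒᵖ P2]
    (a1 : P1 →ₗ[Bᵐᵒᵖ] P0) (a2 : P2 →ₗ[Bᵐᵒᵖ] P1) (h : ∀ x, a1 (a2 x) = 0) :
    Cplx2 B where
  X1 := ModuleCat.of Bᵐᵒᵖ P1
  X0 := ModuleCat.of Bᵐᵒᵖ (P0 × P2)
  d1 := (LinearMap.inl Bᵐᵒᵖ P0 P2) ∘ₗ a1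
  d0 := a2 ∘ₗ (LinearMap.snd Bᵐᵒᵖ P0 P2)
  h01 := fun _ => map_zero a2
  h10 := fun x => Prod.ext (h x.2) rfl


/-- Every morphism of 2-periodic complexes `C_{A1} → C_{A2}` has
vanishing component `c : P0 → Q2`, its components form a chain map between the two
resolutions inducing a unique map `f : A1 → A2`, and the resulting map
`φ : Hom_{C_2(mod B)}(C_{A1}, C_{A2}) → Hom_B(A1, A2)` is surjective. -/
theorem hom_complexes_to_hom_modules_surjective
    (k : Type) [Field k] [Fintype k]
    (B : Type) [Ring B] [Algebra k B] [FiniteDimensional k B]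
    (hgldim : GlobalDimLE B 2)
    (A1 P0 P1 P2 : Type)
    [AddCommGroup A1] [Module Bᵐᵒᵖ A1] [Module.Finite Bᵐᵒᵖ A1]
    [AddCommGroup P0] [Module Bᵐᵒᵖ P0] [Module.Finite Bᵐᵒᵖ P0]
    [AddCommGroup P1] [Module Bᵐᵒᵖ P1] [Module.Finite Bᵐᵒᵖ P1]
    [AddCommGroup P2] [Module Bᵐᵒᵖ P2] [Module.Finite Bᵐᵒᵖ P2]
    (a0 : P0 →ₗ[Bᵐᵒᵖ] A1) (a1 : P1 →ₗ[Bᵐᵒᵖ] P0) (a2 : P2 →ₗ[Bᵐᵒᵖ] P1)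
    (hproj0 : Module.Projective Bᵐᵒᵖ P0) (hproj1 : Module.Projective Bᵐᵒᵖ P1)
    (hproj2 : Module.Projective Bᵐᵒᵖ P2)
    (hinj : Injective a2) (hex2 : LinearMap.range a2 = LinearMap.ker a1)
    (hex1 : LinearMap.range a1 = LinearMap.ker a0) (hsurj : Surjective a0)
    (hmin1 : Superfluous (LinearMap.range a1))
    (hmin2 : Superfluous (LinearMap.range a2))
    (hc : ∀ x, a1 (a2 x) = 0)
    (A2 Q0 Q1 Q2 : Type)
    [AddCommGroup A2] [Module Bᵐᵒᵖ A2] [Module.Finite Bᵐᵒᵖ A2]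
    [AddCommGroup Q0] [Module Bᵐᵒᵖ Q0] [Module.Finite Bᵐᵒᵖ Q0]
    [AddCommGroup Q1] [Module Bᵐᵒᵖ Q1] [Module.Finite Bᵐᵒᵖ Q1]
    [AddCommGroup Q2] [Module Bᵐᵒᵖ Q2] [Module.Finite Bᵐᵒᵖ Q2]
    (b0 : Q0 →ₗ[Bᵐᵒᵖ] A2) (b1 : Q1 →ₗ[Bᵐᵒᵖ] Q0) (b2 : Q2 →ₗ[Bᵐᵒᵖ] Q1)
    (hproj0' : Module.Projective Bᵐᵒᵖ Q0) (hproj1' : Module.Projective Bᵐᵒᵖ Q1)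
    (hproj2' : Module.Projective Bᵐᵒᵖ Q2)
    (hinj' : Injective b2) (hex2' : LinearMap.range b2 = LinearMap.ker b1)
    (hex1' : LinearMap.range b1 = LinearMap.ker b0) (hsurj' : Surjective b0)
    (hmin1' : Superfluous (LinearMap.range b1))
    (hmin2' : Superfluous (LinearMap.range b2))
    (hc' : ∀ x, b1 (b2 x) = 0)
    :
    (∀ F : (CA a1 a2 hc).Hom (CA b1 b2 hc'),
      (∀ u : P0, (F.val.2 (u, 0)).2 = (0 : Q2)) ∧
      (∀ x : P1, (F.val.2 (a1 x, 0)).1 = b1 (F.val.1 x)) ∧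
      (∀ v : P2, F.val.1 (a2 v) = b2 ((F.val.2 (0, v)).2)) ∧
      (∃! f : A1 →ₗ[Bᵐᵒᵖ] A2, ∀ u : P0, f (a0 u) = b0 ((F.val.2 (u, 0)).1))) ∧
    (∀ f : A1 →ₗ[Bᵐᵒᵖ] A2, ∃ F : (CA a1 a2 hc).Hom (CA b1 b2 hc'),
      ∀ u : P0, f (a0 u) = b0 ((F.val.2 (u, 0)).1)) := by
  constructor
  · intro F
    obtain ⟨⟨s1, s0⟩, hF1, hF0⟩ := F
    simp only [CA] at hF1 hF0 ⊢
    have key : ∀ u : P0, (s0 (u, 0)).2 = 0 := by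
      intro u
      have h2 : b2 ((s0 (u, 0)).2) = s1 (a2 (0 : P2)) := hF0 (u, 0)
      replace h2 : b2 ((s0 (u, 0)).2) = 0 := h2.trans ((congrArg s1 (map_zero a2)).trans s1.map_zero)
      exact hinj' (show b2 _ = b2 0 by rw [map_zero, h2])
    refine ⟨key, ?_, ?_, ?_⟩
    · intro x
      have h := hF1 x
      replace h : ((b1 (s1 x), (0 : Q2)) : Q0 × Q2) = s0 (a1 x, 0) := h
      exact congrArg Prod.fst h.symm
    · intro v
      have h := hF0 (0, v)
      exact h.symm
    · -- construct f
      have ha10 : ∀ x : P1, a0 (a1 x) = 0 := by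
        intro x
        have : a1 x ∈ LinearMap.ker a0 := hex1 ▸ LinearMap.mem_range_self a1 x
        exact this
      set g : P0 →ₗ[Bᵐᵒᵖ] Q0 :=
        (LinearMap.fst Bᵐᵒᵖ Q0 Q2) ∘ₗ s0 ∘ₗ (LinearMap.inl Bᵐᵒᵖ P0 P2) with hg
      have hgle : LinearMap.ker a0 ≤ LinearMap.ker (b0 ∘ₗ g) := by
        intro u hu
        rw [← hex1] at hu
        obtain ⟨x, hx⟩ := hu
        have h := hF1 x
        replace h : ((b1 (s1 x), (0 : Q2)) : Q0 × Q2) = s0 (a1 x, 0) := h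
        have h1 : (s0 (a1 x, 0)).1 = b1 (s1 x) := congrArg Prod.fst h.symm
        have hb : b0 (b1 (s1 x)) = 0 := by
          have : b1 (s1 x) ∈ LinearMap.ker b0 := hex1' ▸ LinearMap.mem_range_self b1 _
          exact this
        simp only [LinearMap.mem_ker, LinearMap.coe_comp, Function.comp_apply]
        rw [← hx]
        have hgx : g (a1 x) = b1 (s1 x) := h1
        rw [hgx]; exact hb
      set e := a0.quotKerEquivOfSurjective hsurj with he
      set f : A1 →ₗ[Bᵐᵒᵖ] A2 :=
        ((LinearMap.ker a0).liftQ (b0 ∘ₗ g) hgle) ∘ₗ e.symm.toLinearMap with hf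
      have hemk : ∀ u : P0, e (Submodule.Quotient.mk u) = a0 u := fun u => rfl
      have hfa : ∀ u : P0, f (a0 u) = b0 ((s0 (u, 0)).1) := by
        intro u
        have : e.symm.toLinearMap (a0 u) = Submodule.Quotient.mk u := by
          apply e.injective
          simp [hemk u]
        simp only [hf, LinearMap.coe_comp, Function.comp_apply, this,
          Submodule.liftQ_apply]
        rfl
      refine ⟨f, hfa, ?_⟩
      intro f' hf'
      ext a
      obtain ⟨u, rfl⟩ := hsurj a
      rw [hf' u, hfa u]
      rfl
  · intro f
    haveI := hproj0; haveI := hproj1; haveI := hproj2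
    obtain ⟨s0', hs0'⟩ := Module.projective_lifting_property b0 (f ∘ₗ a0) hsurj'
    have hs0 : ∀ u, b0 (s0' u) = f (a0 u) := fun u => LinearMap.congr_fun hs0' u
    have ha10 : ∀ x : P1, a0 (a1 x) = 0 := by
      intro x
      have : a1 x ∈ LinearMap.ker a0 := hex1 ▸ LinearMap.mem_range_self a1 x
      exact this
    have hT : ∀ x : P1, s0' (a1 x) ∈ LinearMap.range b1 := by
      intro x
      rw [hex1']
      show b0 (s0' (a1 x)) = 0
      rw [hs0, ha10, map_zero]
    obtain ⟨s1, hs1⟩ := Module.projective_lifting_property b1.rangeRestrict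
      ((s0' ∘ₗ a1).codRestrict (LinearMap.range b1) hT) b1.surjective_rangeRestrict
    have hs1' : ∀ x, b1 (s1 x) = s0' (a1 x) := fun x =>
      congrArg Subtype.val (LinearMap.congr_fun hs1 x)
    have hb10 : ∀ v : P2, b1 (s1 (a2 v)) = 0 := by
      intro v
      rw [hs1']
      have : a1 (a2 v) = 0 := hc v
      rw [this, map_zero]
    have hS : ∀ v : P2, s1 (a2 v) ∈ LinearMap.range b2 := by
      intro v
      rw [hex2']
      exact hb10 v
    obtain ⟨s2, hs2⟩ := Module.projective_lifting_property b2.rangeRestrict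
      ((s1 ∘ₗ a2).codRestrict (LinearMap.range b2) hS) b2.surjective_rangeRestrict
    have hs2' : ∀ v, b2 (s2 v) = s1 (a2 v) := fun v =>
      congrArg Subtype.val (LinearMap.congr_fun hs2 v)
    refine ⟨⟨(s1, LinearMap.prodMap s0' s2), ?_, ?_⟩, ?_⟩
    · intro x
      show ((b1 (s1 x), 0) : Q0 × Q2) = (s0' (a1 x), s2 0)
      rw [hs1' x, map_zero]
    · intro u
      exact hs2' u.2
    · intro u
      exact (hs0 u).symm
end

section
/- Let B be a finite-dimensional algebra over k = F_q of global dimension at most 2, let A1, A2 be finite-dimensional right B-modules with minimal projective resolutions 0 → P2 → P1 → P0 → A1 → 0 and 0 → Q2 → Q1 → Q0 → A2 → 0, and let φ : Hom_{C_2(mod B)}(C_{A1}, C_{A2}) → Hom_B(A1, A2) be the surjective k-linear map sending a morphism of 2-periodic complexes to the induced morphism A1 → A2. Then the kernel of φ has cardinality |Hom_B(P2, Q0)| · |Hom_B(P1, Q2)| · |Hom_B(P0, Q1)| / |Hom_B(P0, Q2)|. -/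
open Function

section Aux
variable {R M N P : Type*} [Ring R] [AddCommGroup M] [Module R M]
  [AddCommGroup N] [Module R N] [AddCommGroup P] [Module R P]

lemma lift_of_range_le [Module.Projective R P] (f : M →ₗ[R] N) (g : P →ₗ[R] N)
    (hle : LinearMap.range g ≤ LinearMap.range f) :
    ∃ s : P →ₗ[R] M, f ∘ₗ s = g := by
  obtain ⟨s, hs⟩ := Module.projective_lifting_property f.rangeRestrict
    (g.codRestrict (LinearMap.range f) fun x => hle ⟨x, rfl⟩)
    f.surjective_rangeRestrict
  exact ⟨s, by ext x; exact congrArg Subtype.val (LinearMap.congr_fun hs x)⟩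

lemma factor_of_injective (f : M →ₗ[R] N) (hf : Injective f) (g : P →ₗ[R] N)
    (hle : LinearMap.range g ≤ LinearMap.range f) :
    ∃ t : P →ₗ[R] M, f ∘ₗ t = g := by
  have key : ∀ y : LinearMap.range f, f ((LinearEquiv.ofInjective f hf).symm y) = y := by
    intro y
    rw [← LinearEquiv.ofInjective_apply (f := f) (h := hf), LinearEquiv.apply_symm_apply]
  exact ⟨(LinearEquiv.ofInjective f hf).symm.toLinearMap ∘ₗ
    (g.codRestrict (LinearMap.range f) fun x => hle ⟨x, rfl⟩),
    by ext x; exact key _⟩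
end Aux

def psi {B : Type} [Ring B] {P0 P1 P2 Q0 Q1 Q2 : Type}
    [AddCommGroup P0] [Module Bᵐᵒᵖ P0] [AddCommGroup P1] [Module Bᵐᵒᵖ P1]
    [AddCommGroup P2] [Module Bᵐᵒᵖ P2]
    [AddCommGroup Q0] [Module Bᵐᵒᵖ Q0] [AddCommGroup Q1] [Module Bᵐᵒᵖ Q1]
    [AddCommGroup Q2] [Module Bᵐᵒᵖ Q2]
    (a1 : P1 →ₗ[Bᵐᵒᵖ] P0) (a2 : P2 →ₗ[Bᵐᵒᵖ] P1) (hc : ∀ x, a1 (a2 x) = 0)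
    (b1 : Q1 →ₗ[Bᵐᵒᵖ] Q0) (b2 : Q2 →ₗ[Bᵐᵒᵖ] Q1) (hc' : ∀ x, b1 (b2 x) = 0)
    (β : P2 →ₗ[Bᵐᵒᵖ] Q0) (t : P1 →ₗ[Bᵐᵒᵖ] Q2) (s : P0 →ₗ[Bᵐᵒᵖ] Q1) :
    (CA a1 a2 hc).Hom (CA b1 b2 hc') :=
  ⟨(b2 ∘ₗ t + s ∘ₗ a1,
    LinearMap.prod (LinearMap.coprod (b1 ∘ₗ s) β) (LinearMap.coprod 0 (t ∘ₗ a2))),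
    ⟨fun x => show ((b1 (b2 (t x) + s (a1 x)), (0:Q2)) : Q0 × Q2)
        = (b1 (s (a1 x)) + β 0, 0 + t (a2 0)) by simp [hc'],
     fun x => show b2 ((0:Q2) + t (a2 x.2)) = b2 (t (a2 x.2)) + s (a1 (a2 x.2)) by
       simp [hc]⟩⟩

/-- The kernel of the surjection
`φ : Hom_{C_2(mod B)}(C_{A1}, C_{A2}) → Hom_B(A1, A2)` (which sends a morphism of
2-periodic complexes to the induced module map, so that `F ∈ ker φ` iff the induced
map — characterized by `f ∘ a0 = b0 ∘ a` — vanishes, i.e. iff `b0 ∘ a = 0`) has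
cardinality `|Hom(P2,Q0)| ⬝ |Hom(P1,Q2)| ⬝ |Hom(P0,Q1)| / |Hom(P0,Q2)|`. -/
theorem card_ker_phi
    (k : Type) [Field k] [Fintype k]
    (B : Type) [Ring B] [Algebra k B] [FiniteDimensional k B]
    (hgldim : GlobalDimLE B 2)
    (A1 P0 P1 P2 : Type)
    [AddCommGroup A1] [Module Bᵐᵒᵖ A1] [Module.Finite Bᵐᵒᵖ A1]
    [AddCommGroup P0] [Module Bᵐᵒᵖ P0] [Module.Finite Bᵐᵒᵖ P0]
    [AddCommGroup P1] [Module Bᵐᵒᵖ P1] [Module.Finite Bᵐᵒᵖ P1]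
    [AddCommGroup P2] [Module Bᵐᵒᵖ P2] [Module.Finite Bᵐᵒᵖ P2]
    (a0 : P0 →ₗ[Bᵐᵒᵖ] A1) (a1 : P1 →ₗ[Bᵐᵒᵖ] P0) (a2 : P2 →ₗ[Bᵐᵒᵖ] P1)
    (hproj0 : Module.Projective Bᵐᵒᵖ P0) (hproj1 : Module.Projective Bᵐᵒᵖ P1)
    (hproj2 : Module.Projective Bᵐᵒᵖ P2)
    (hinj : Injective a2) (hex2 : LinearMap.range a2 = LinearMap.ker a1)
    (hex1 : LinearMap.range a1 = LinearMap.ker a0) (hsurj : Surjective a0)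
    (hmin1 : Superfluous (LinearMap.range a1))
    (hmin2 : Superfluous (LinearMap.range a2))
    (hc : ∀ x, a1 (a2 x) = 0)
    (A2 Q0 Q1 Q2 : Type)
    [AddCommGroup A2] [Module Bᵐᵒᵖ A2] [Module.Finite Bᵐᵒᵖ A2]
    [AddCommGroup Q0] [Module Bᵐᵒᵖ Q0] [Module.Finite Bᵐᵒᵖ Q0]
    [AddCommGroup Q1] [Module Bᵐᵒᵖ Q1] [Module.Finite Bᵐᵒᵖ Q1]
    [AddCommGroup Q2] [Module Bᵐᵒᵖ Q2] [Module.Finite Bᵐᵒᵖ Q2]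
    (b0 : Q0 →ₗ[Bᵐᵒᵖ] A2) (b1 : Q1 →ₗ[Bᵐᵒᵖ] Q0) (b2 : Q2 →ₗ[Bᵐᵒᵖ] Q1)
    (hproj0' : Module.Projective Bᵐᵒᵖ Q0) (hproj1' : Module.Projective Bᵐᵒᵖ Q1)
    (hproj2' : Module.Projective Bᵐᵒᵖ Q2)
    (hinj' : Injective b2) (hex2' : LinearMap.range b2 = LinearMap.ker b1)
    (hex1' : LinearMap.range b1 = LinearMap.ker b0) (hsurj' : Surjective b0)
    (hmin1' : Superfluous (LinearMap.range b1))
    (hmin2' : Superfluous (LinearMap.range b2))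
    (hc' : ∀ x, b1 (b2 x) = 0)
    :
    Nat.card {F : (CA a1 a2 hc).Hom (CA b1 b2 hc') //
        ∀ u : P0, b0 ((F.val.2 (u, 0)).1) = 0} *
      Nat.card (P0 →ₗ[Bᵐᵒᵖ] Q2) =
    Nat.card (P2 →ₗ[Bᵐᵒᵖ] Q0) * Nat.card (P1 →ₗ[Bᵐᵒᵖ] Q2) *
      Nat.card (P0 →ₗ[Bᵐᵒᵖ] Q1) := by
  classical
  haveI := hproj0
  have hb0b1 : ∀ y : Q1, b0 (b1 y) = 0 := fun y => by
    have : b1 y ∈ LinearMap.ker b0 := hex1' ▸ LinearMap.mem_range_self b1 y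
    exact this
  set T := {F : (CA a1 a2 hc).Hom (CA b1 b2 hc') //
      ∀ u : P0, b0 ((F.val.2 (u, 0)).1) = 0} with hT
  have hcond : ∀ (β : P2 →ₗ[Bᵐᵒᵖ] Q0) (t : P1 →ₗ[Bᵐᵒᵖ] Q2) (s : P0 →ₗ[Bᵐᵒᵖ] Q1)
      (u : P0), b0 (((psi a1 a2 hc b1 b2 hc' β t s).val.2 (u, 0)).1) = 0 := by
    intro β t s u
    show b0 (b1 (s u) + β 0) = 0
    simp [hb0b1]
  set psiT : (P2 →ₗ[Bᵐᵒᵖ] Q0) × (P1 →ₗ[Bᵐᵒᵖ] Q2) × (P0 →ₗ[Bᵐᵒᵖ] Q1) → T :=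
    fun x => ⟨psi a1 a2 hc b1 b2 hc' x.1 x.2.1 x.2.2, hcond x.1 x.2.1 x.2.2⟩ with hpsiT
  -- A1 : translating along ι does not change psi
  have A1 : ∀ (β : P2 →ₗ[Bᵐᵒᵖ] Q0) (t : P1 →ₗ[Bᵐᵒᵖ] Q2) (s : P0 →ₗ[Bᵐᵒᵖ] Q1)
      (r : P0 →ₗ[Bᵐᵒᵖ] Q2),
      psi a1 a2 hc b1 b2 hc' β (t - r ∘ₗ a1) (s + b2 ∘ₗ r) = psi a1 a2 hc b1 b2 hc' β t s := by
    intro β t s r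
    apply Subtype.ext
    refine Prod.ext ?_ ?_
    · apply LinearMap.ext; intro x
      show b2 ((t - r ∘ₗ a1) x) + (s + b2 ∘ₗ r) (a1 x) = b2 (t x) + s (a1 x)
      simp only [LinearMap.sub_apply, LinearMap.add_apply, LinearMap.comp_apply, map_sub]
      rw [show (t - r ∘ₗ a1) x = t x - r (a1 x) from rfl, map_sub]
      abel
    · apply LinearMap.ext; intro x
      refine Prod.ext ?_ ?_
      · show b1 ((s + b2 ∘ₗ r) x.1) + β x.2 = b1 (s x.1) + β x.2
        simp [hc']
      · show (0:Q2) + (t - r ∘ₗ a1) (a2 x.2) = 0 + t (a2 x.2)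
        simp [hc]
  -- A2 : fibers of psi are translates along ι
  have A2 : ∀ (β : P2 →ₗ[Bᵐᵒᵖ] Q0) (t : P1 →ₗ[Bᵐᵒᵖ] Q2) (s : P0 →ₗ[Bᵐᵒᵖ] Q1)
      (β' : P2 →ₗ[Bᵐᵒᵖ] Q0) (t' : P1 →ₗ[Bᵐᵒᵖ] Q2) (s' : P0 →ₗ[Bᵐᵒᵖ] Q1),
      psi a1 a2 hc b1 b2 hc' β t s = psi a1 a2 hc b1 b2 hc' β' t' s' →
      ∃ r : P0 →ₗ[Bᵐᵒᵖ] Q2, β' = β ∧ t' = t - r ∘ₗ a1 ∧ s' = s + b2 ∘ₗ r := by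
    intro β t s β' t' s' h
    have hval := congrArg Subtype.val h
    have h1 := congrArg Prod.fst hval
    have h2 := congrArg Prod.snd hval
    have hβ : β' = β := by
      apply LinearMap.ext; intro v
      have e : ((b1 (s (0:P0)) + β v, (0:Q2) + t (a2 v)) : Q0 × Q2)
          = (b1 (s' 0) + β' v, 0 + t' (a2 v)) := LinearMap.congr_fun h2 ((0:P0), v)
      have e1 := congrArg Prod.fst e
      simpa using e1.symm
    have hb1s : ∀ u : P0, b1 (s u) = b1 (s' u) := by
      intro u
      have e : ((b1 (s u) + β (0:P2), (0:Q2) + t (a2 (0:P2))) : Q0 × Q2)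
          = (b1 (s' u) + β' 0, 0 + t' (a2 0)) := LinearMap.congr_fun h2 (u, (0:P2))
      have e1 := congrArg Prod.fst e
      simpa using e1
    obtain ⟨r, hr⟩ := factor_of_injective b2 hinj' (s' - s) (by
      rintro y ⟨u, rfl⟩
      rw [hex2', LinearMap.mem_ker, LinearMap.sub_apply, map_sub, ← hb1s u, sub_self])
    have hs' : s' = s + b2 ∘ₗ r := by rw [hr]; abel
    have ht' : t' = t - r ∘ₗ a1 := by
      apply LinearMap.ext; intro x
      apply hinj'
      have e1 : b2 (t x) + s (a1 x) = b2 (t' x) + s' (a1 x) := LinearMap.congr_fun h1 x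
      have e2 : b2 (r (a1 x)) = s' (a1 x) - s (a1 x) := by
        have := LinearMap.congr_fun hr (a1 x)
        simpa using this
      show b2 (t' x) = b2 ((t - r ∘ₗ a1) x)
      rw [LinearMap.sub_apply, map_sub, LinearMap.comp_apply, e2]
      have e3 : b2 (t' x) = b2 (t x) + s (a1 x) - s' (a1 x) := by rw [e1]; abel
      rw [e3]; abel
    exact ⟨r, hβ, ht', hs'⟩
  -- surjectivity of psiT
  have S : ∀ F : T, ∃ x : (P2 →ₗ[Bᵐᵒᵖ] Q0) × (P1 →ₗ[Bᵐᵒᵖ] Q2) × (P0 →ₗ[Bᵐᵒᵖ] Q1),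
      psiT x = F := by
    rintro ⟨⟨⟨h, g⟩, m1, m2⟩, hcnd⟩
    obtain ⟨h0, hh0⟩ : ∃ h0 : P1 →ₗ[Bᵐᵒᵖ] Q1, ∀ x : P1, h0 x = h x := ⟨h, fun _ => rfl⟩
    obtain ⟨g0, hg0⟩ : ∃ g0 : (P0 × P2) →ₗ[Bᵐᵒᵖ] Q0 × Q2, ∀ x : P0 × P2, g0 x = g x :=
      ⟨g, fun _ => rfl⟩
    have m1' : ∀ x : P1, ((b1 (h0 x), (0:Q2)) : Q0 × Q2) = g0 (a1 x, 0) := by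
      intro x
      rw [hh0, hg0]
      exact m1 x
    have m2' : ∀ (u : P0) (v : P2), b2 ((g0 (u, v)).2) = h0 (a2 v) := by
      intro u v
      rw [hg0, hh0]
      exact m2 (u, v)
    have hcnd' : ∀ u : P0, b0 ((g0 (u, 0)).1) = 0 := by
      intro u
      rw [hg0]
      exact hcnd u
    have hγ : ∀ u : P0, (g0 (u, 0)).2 = 0 := by
      intro u
      apply hinj'
      rw [m2' u 0]
      simp
    have hle1 : LinearMap.range ((LinearMap.fst Bᵐᵒᵖ Q0 Q2) ∘ₗ
        g0 ∘ₗ (LinearMap.inl Bᵐᵒᵖ P0 P2)) ≤ LinearMap.range b1 := by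
      rintro y ⟨u, rfl⟩
      rw [hex1', LinearMap.mem_ker]
      exact hcnd' u
    obtain ⟨s, hs⟩ := lift_of_range_le b1 _ hle1
    have hs' : ∀ u : P0, b1 (s u) = (g0 (u, 0)).1 := by
      intro u
      have := LinearMap.congr_fun hs u
      simpa using this
    have hle2 : LinearMap.range (h0 - s ∘ₗ a1) ≤ LinearMap.range b2 := by
      rintro y ⟨x, rfl⟩
      rw [hex2', LinearMap.mem_ker]
      have e1 : b1 (h0 x) = (g0 (a1 x, 0)).1 := congrArg Prod.fst (m1' x)
      rw [LinearMap.sub_apply, map_sub, LinearMap.comp_apply, e1, hs', sub_self]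
    obtain ⟨t, ht⟩ := factor_of_injective b2 hinj' _ hle2
    have ht' : ∀ x : P1, b2 (t x) = h0 x - s (a1 x) := by
      intro x
      have := LinearMap.congr_fun ht x
      simpa using this
    refine ⟨((LinearMap.fst Bᵐᵒᵖ Q0 Q2) ∘ₗ g0 ∘ₗ (LinearMap.inr Bᵐᵒᵖ P0 P2), t, s), ?_⟩
    apply Subtype.ext
    apply Subtype.ext
    refine Prod.ext ?_ ?_
    · apply LinearMap.ext; intro x
      rw [← hh0 x]
      show b2 (t x) + s (a1 x) = h0 x
      rw [ht' x]; abel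
    · apply LinearMap.ext; intro x
      obtain ⟨u, v⟩ := x
      rw [← hg0 (u, v)]
      have hadd : g0 (u, v) = g0 (u, 0) + g0 (0, v) := by
        rw [← map_add, Prod.mk_add_mk, add_zero, zero_add]
      show ((b1 (s u) + (g0 ((0:P0), v)).1, (0:Q2) + t (a2 v)) : Q0 × Q2) = g0 (u, v)
      rw [hadd]
      refine Prod.ext ?_ ?_
      · show b1 (s u) + (g0 ((0:P0), v)).1 = (g0 (u, 0) + g0 (0, v)).1
        rw [hs' u, Prod.fst_add]
      · show (0:Q2) + t (a2 v) = (g0 (u, 0) + g0 (0, v)).2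
        have e3 : t (a2 v) = (g0 ((0:P0), v)).2 := by
          apply hinj'
          rw [m2' 0 v, ht' (a2 v), hc, map_zero, sub_zero]
        rw [Prod.snd_add, hγ u, e3]
  choose σ hσ using S
  have key : ∀ (y : (P2 →ₗ[Bᵐᵒᵖ] Q0) × (P1 →ₗ[Bᵐᵒᵖ] Q2) × (P0 →ₗ[Bᵐᵒᵖ] Q1))
      (r : P0 →ₗ[Bᵐᵒᵖ] Q2),
      psiT (y.1, y.2.1 - r ∘ₗ a1, y.2.2 + b2 ∘ₗ r) = psiT y :=
    fun y r => Subtype.ext (A1 y.1 y.2.1 y.2.2 r)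
  have hbij : Bijective (fun x : T × (P0 →ₗ[Bᵐᵒᵖ] Q2) =>
      ((σ x.1).1, (σ x.1).2.1 - x.2 ∘ₗ a1, (σ x.1).2.2 + b2 ∘ₗ x.2)) := by
    constructor
    · rintro ⟨F, r⟩ ⟨F', r'⟩ hEq
      dsimp only at hEq
      have h1 : psiT ((σ F).1, (σ F).2.1 - r ∘ₗ a1, (σ F).2.2 + b2 ∘ₗ r) = F := by
        rw [key (σ F) r, hσ F]
      have h2 : psiT ((σ F').1, (σ F').2.1 - r' ∘ₗ a1, (σ F').2.2 + b2 ∘ₗ r') = F' := by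
        rw [key (σ F') r', hσ F']
      have hF : F = F' := by rw [← h1, ← h2, hEq]
      refine Prod.ext hF ?_
      have h3 := congrArg (fun z : (P2 →ₗ[Bᵐᵒᵖ] Q0) × (P1 →ₗ[Bᵐᵒᵖ] Q2) × (P0 →ₗ[Bᵐᵒᵖ] Q1)
        => z.2.2) hEq
      dsimp only at h3
      rw [hF] at h3
      have h4 : b2 ∘ₗ r = b2 ∘ₗ r' := add_left_cancel h3
      apply LinearMap.ext; intro u
      exact hinj' (LinearMap.congr_fun h4 u)
    · intro x
      obtain ⟨r, hβ, ht, hs⟩ := A2 (σ (psiT x)).1 (σ (psiT x)).2.1 (σ (psiT x)).2.2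
        x.1 x.2.1 x.2.2 (congrArg Subtype.val (hσ (psiT x)))
      refine ⟨(psiT x, r), ?_⟩
      dsimp only
      rw [← hβ, ← ht, ← hs]
  calc Nat.card T * Nat.card (P0 →ₗ[Bᵐᵒᵖ] Q2)
      = Nat.card (T × (P0 →ₗ[Bᵐᵒᵖ] Q2)) := (Nat.card_prod _ _).symm
    _ = Nat.card ((P2 →ₗ[Bᵐᵒᵖ] Q0) × (P1 →ₗ[Bᵐᵒᵖ] Q2) × (P0 →ₗ[Bᵐᵒᵖ] Q1)) :=
        Nat.card_congr (Equiv.ofBijective _ hbij)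
    _ = _ := by rw [Nat.card_prod, Nat.card_prod, mul_assoc]
end

section
/- Let B be a finite-dimensional algebra over k = F_q of global dimension at most 2, and let A1, A2 be finite-dimensional right B-modules with minimal projective resolutions 0 → P2 → P1 → P0 → A1 → 0 and 0 → Q2 → Q1 → Q0 → A2 → 0 and associated 2-periodic complexes C_{A1}, C_{A2}. Then |Hom_{C_2(mod B)}(C_{A1}, C_{A2})| = |Hom_B(A1, A2)| · |Hom_B(P2, Q0)| · |Hom_B(P1, Q2)| · |Hom_B(P0, Q1)| / |Hom_B(P0, Q2)|. -/
open Function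

section Helpers

lemma my_card_ker_mul_card_range {G H : Type*} [AddGroup G] [AddGroup H]
    (φ : G →+ H) : Nat.card G = Nat.card φ.ker * Nat.card φ.range := by
  rw [AddSubgroup.card_eq_card_quotient_mul_card_addSubgroup φ.ker,
      Nat.card_congr (QuotientAddGroup.quotientKerEquivRange φ).toEquiv, Nat.mul_comm]

variable {R : Type} [Ring R]

lemma my_exists_lift {P Q1 Q0 : Type*} [AddCommGroup P] [Module R P]
    [AddCommGroup Q1] [Module R Q1] [AddCommGroup Q0] [Module R Q0]
    (hP : Module.Projective R P)
    (b : Q1 →ₗ[R] Q0) (g : P →ₗ[R] Q0) (h : ∀ x, g x ∈ LinearMap.range b) :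
    ∃ f : P →ₗ[R] Q1, b ∘ₗ f = g := by
  obtain ⟨f, hf⟩ := Module.projective_lifting_property (h := hP) b.rangeRestrict
    (LinearMap.codRestrict (LinearMap.range b) g h) (LinearMap.surjective_rangeRestrict b)
  exact ⟨f, by ext x; exact congrArg Subtype.val (LinearMap.congr_fun hf x)⟩

lemma my_card_subtype_comp {P Q2 Q1 : Type*} [AddCommGroup P] [Module R P]
    [AddCommGroup Q1] [Module R Q1] [AddCommGroup Q2] [Module R Q2]
    (b2 : Q2 →ₗ[R] Q1) (hinj : Injective b2) :
    Nat.card {f : P →ₗ[R] Q1 // ∀ x, f x ∈ LinearMap.range b2} = Nat.card (P →ₗ[R] Q2) := by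
  apply Nat.card_congr
  symm
  refine Equiv.ofBijective (fun g => ⟨b2 ∘ₗ g, fun x => ⟨g x, rfl⟩⟩) ⟨?_, ?_⟩
  · intro g g' h
    ext x
    exact hinj (LinearMap.congr_fun (congrArg Subtype.val h) x)
  · rintro ⟨f, hf⟩
    set e := LinearEquiv.ofInjective b2 hinj
    refine ⟨e.symm.toLinearMap ∘ₗ LinearMap.codRestrict (LinearMap.range b2) f hf, ?_⟩
    apply Subtype.ext
    ext x
    show b2 (e.symm ⟨f x, hf x⟩) = f x
    have : b2 (e.symm ⟨f x, hf x⟩) = ((e (e.symm ⟨f x, hf x⟩)) : Q1) := rfl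
    rw [this, e.apply_symm_apply]

instance my_finite_linearMap {M N : Type*} [AddCommGroup M] [Module R M]
    [AddCommGroup N] [Module R N] [Finite M] [Finite N] : Finite (M →ₗ[R] N) :=
  Finite.of_injective (fun f => (f : M → N)) DFunLike.coe_injective

end Helpers

/-- `|Hom_{C_2(mod B)}(C_{A1}, C_{A2})| =
|Hom_B(A1,A2)| ⬝ |Hom(P2,Q0)| ⬝ |Hom(P1,Q2)| ⬝ |Hom(P0,Q1)| / |Hom(P0,Q2)|`. -/
theorem card_hom_complexes
    (k : Type) [Field k] [Fintype k]
    (B : Type) [Ring B] [Algebra k B] [FiniteDimensional k B]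
    (hgldim : GlobalDimLE B 2)
    (A1 P0 P1 P2 : Type)
    [AddCommGroup A1] [Module Bᵐᵒᵖ A1] [Module.Finite Bᵐᵒᵖ A1]
    [AddCommGroup P0] [Module Bᵐᵒᵖ P0] [Module.Finite Bᵐᵒᵖ P0]
    [AddCommGroup P1] [Module Bᵐᵒᵖ P1] [Module.Finite Bᵐᵒᵖ P1]
    [AddCommGroup P2] [Module Bᵐᵒᵖ P2] [Module.Finite Bᵐᵒᵖ P2]
    (a0 : P0 →ₗ[Bᵐᵒᵖ] A1) (a1 : P1 →ₗ[Bᵐᵒᵖ] P0) (a2 : P2 →ₗ[Bᵐᵒᵖ] P1)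
    (hproj0 : Module.Projective Bᵐᵒᵖ P0) (hproj1 : Module.Projective Bᵐᵒᵖ P1)
    (hproj2 : Module.Projective Bᵐᵒᵖ P2)
    (hinj : Injective a2) (hex2 : LinearMap.range a2 = LinearMap.ker a1)
    (hex1 : LinearMap.range a1 = LinearMap.ker a0) (hsurj : Surjective a0)
    (hmin1 : Superfluous (LinearMap.range a1))
    (hmin2 : Superfluous (LinearMap.range a2))
    (hc : ∀ x, a1 (a2 x) = 0)
    (A2 Q0 Q1 Q2 : Type)
    [AddCommGroup A2] [Module Bᵐᵒᵖ A2] [Module.Finite Bᵐᵒᵖ A2]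
    [AddCommGroup Q0] [Module Bᵐᵒᵖ Q0] [Module.Finite Bᵐᵒᵖ Q0]
    [AddCommGroup Q1] [Module Bᵐᵒᵖ Q1] [Module.Finite Bᵐᵒᵖ Q1]
    [AddCommGroup Q2] [Module Bᵐᵒᵖ Q2] [Module.Finite Bᵐᵒᵖ Q2]
    (b0 : Q0 →ₗ[Bᵐᵒᵖ] A2) (b1 : Q1 →ₗ[Bᵐᵒᵖ] Q0) (b2 : Q2 →ₗ[Bᵐᵒᵖ] Q1)
    (hproj0' : Module.Projective Bᵐᵒᵖ Q0) (hproj1' : Module.Projective Bᵐᵒᵖ Q1)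
    (hproj2' : Module.Projective Bᵐᵒᵖ Q2)
    (hinj' : Injective b2) (hex2' : LinearMap.range b2 = LinearMap.ker b1)
    (hex1' : LinearMap.range b1 = LinearMap.ker b0) (hsurj' : Surjective b0)
    (hmin1' : Superfluous (LinearMap.range b1))
    (hmin2' : Superfluous (LinearMap.range b2))
    (hc' : ∀ x, b1 (b2 x) = 0)
    :
    Nat.card ((CA a1 a2 hc).Hom (CA b1 b2 hc')) * Nat.card (P0 →ₗ[Bᵐᵒᵖ] Q2) =
    Nat.card (A1 →ₗ[Bᵐᵒᵖ] A2) * Nat.card (P2 →ₗ[Bᵐᵒᵖ] Q0) *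
      Nat.card (P1 →ₗ[Bᵐᵒᵖ] Q2) * Nat.card (P0 →ₗ[Bᵐᵒᵖ] Q1) := by
  classical
  haveI : Finite B := Module.finite_of_finite k
  haveI : Finite Bᵐᵒᵖ := Finite.of_equiv B MulOpposite.opEquiv
  haveI : Finite A1 := Module.finite_of_finite Bᵐᵒᵖ
  haveI : Finite A2 := Module.finite_of_finite Bᵐᵒᵖ
  haveI : Finite P0 := Module.finite_of_finite Bᵐᵒᵖ
  haveI : Finite P1 := Module.finite_of_finite Bᵐᵒᵖ
  haveI : Finite P2 := Module.finite_of_finite Bᵐᵒᵖ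
  haveI : Finite Q0 := Module.finite_of_finite Bᵐᵒᵖ
  haveI : Finite Q1 := Module.finite_of_finite Bᵐᵒᵖ
  haveI : Finite Q2 := Module.finite_of_finite Bᵐᵒᵖ
  -- the subgroup of "partial chain maps" as a kernel
  set δ : ((P1 →ₗ[Bᵐᵒᵖ] Q1) × (P0 →ₗ[Bᵐᵒᵖ] Q0)) →+ (P1 →ₗ[Bᵐᵒᵖ] Q0) :=
    AddMonoidHom.mk' (fun p => b1 ∘ₗ p.1 - p.2 ∘ₗ a1) (by
      intro p q
      ext x
      simp only [LinearMap.sub_apply, LinearMap.comp_apply, Prod.fst_add, Prod.snd_add,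
        LinearMap.add_apply, map_add]
      abel) with hδdef
  have mem_ker_δ : ∀ p : (P1 →ₗ[Bᵐᵒᵖ] Q1) × (P0 →ₗ[Bᵐᵒᵖ] Q0),
      p ∈ δ.ker ↔ ∀ x, b1 (p.1 x) = p.2 (a1 x) := by
    intro p
    rw [AddMonoidHom.mem_ker, hδdef]
    simp only [AddMonoidHom.mk'_apply, sub_eq_zero]
    constructor
    · intro h x; exact LinearMap.congr_fun h x
    · intro h; ext x; exact h x
  have hb10 : ∀ q : Q1, b0 (b1 q) = 0 := by
    intro q
    have : b1 q ∈ LinearMap.ker b0 := by rw [← hex1']; exact ⟨q, rfl⟩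
    exact this
  -- Step 1 : Hom(C_A1, C_A2) ≃ Hom(P2, Q0) × ker δ
  let F : ((CA a1 a2 hc).Hom (CA b1 b2 hc')) → ((P2 →ₗ[Bᵐᵒᵖ] Q0) × δ.ker) :=
    fun h =>
      ( (LinearMap.fst Bᵐᵒᵖ Q0 Q2) ∘ₗ h.val.2 ∘ₗ (LinearMap.inr Bᵐᵒᵖ P0 P2),
        ⟨(h.val.1, (LinearMap.fst Bᵐᵒᵖ Q0 Q2) ∘ₗ h.val.2 ∘ₗ (LinearMap.inl Bᵐᵒᵖ P0 P2)), by
          rw [mem_ker_δ]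
          intro x
          have h1 := h.prop.1 x
          exact congrArg Prod.fst h1⟩ )
  have hFbij : Bijective F := by
    constructor
    · intro h h' heq
      have e1 : h.val.1 = h'.val.1 := congrArg (fun p : (P2 →ₗ[Bᵐᵒᵖ] Q0) × δ.ker => p.2.val.1) heq
      have e02 : (LinearMap.fst Bᵐᵒᵖ Q0 Q2) ∘ₗ h.val.2 ∘ₗ (LinearMap.inr Bᵐᵒᵖ P0 P2)
          = (LinearMap.fst Bᵐᵒᵖ Q0 Q2) ∘ₗ h'.val.2 ∘ₗ (LinearMap.inr Bᵐᵒᵖ P0 P2) :=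
        congrArg Prod.fst heq
      have e00 : (LinearMap.fst Bᵐᵒᵖ Q0 Q2) ∘ₗ h.val.2 ∘ₗ (LinearMap.inl Bᵐᵒᵖ P0 P2)
          = (LinearMap.fst Bᵐᵒᵖ Q0 Q2) ∘ₗ h'.val.2 ∘ₗ (LinearMap.inl Bᵐᵒᵖ P0 P2) :=
        congrArg (fun p : (P2 →ₗ[Bᵐᵒᵖ] Q0) × δ.ker => p.2.val.2) heq
      apply Subtype.ext
      apply Prod.ext e1
      ext z
      have hsplit : ∀ (g : ((P0 × P2) →ₗ[Bᵐᵒᵖ] (Q0 × Q2))) (u : P0) (v : P2),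
          g (u, v) = g (u, 0) + g (0, v) := by
        intro g u v
        rw [← map_add]
        congr 1
        refine Prod.ext ?_ ?_
        · show u = u + 0
          rw [add_zero]
        · show v = 0 + v
          rw [zero_add]
      apply Prod.ext
      · show (h.val.2 z).1 = (h'.val.2 z).1
        have s1 := hsplit h.val.2 z.1 z.2
        have s2 := hsplit h'.val.2 z.1 z.2
        have c1 : (h.val.2 (z.1, (0:P2))).1 = (h'.val.2 (z.1, (0:P2))).1 :=
          LinearMap.congr_fun e00 z.1
        have c2 : (h.val.2 ((0:P0), z.2)).1 = (h'.val.2 ((0:P0), z.2)).1 :=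
          LinearMap.congr_fun e02 z.2
        exact (congrArg Prod.fst s1).trans
          ((congrArg₂ (· + ·) c1 c2).trans (congrArg Prod.fst s2).symm)
      · show (h.val.2 z).2 = (h'.val.2 z).2
        apply hinj'
        have p2 := h.prop.2 z
        have p2' := h'.prop.2 z
        show b2 ((h.val.2 z).2) = b2 ((h'.val.2 z).2)
        exact p2.trans ((LinearMap.congr_fun e1 _).trans p2'.symm)
    · rintro ⟨g02, ⟨⟨f1, g00⟩, hmem⟩⟩
      have hmem' := (mem_ker_δ _).1 hmem
      have hr : ∀ x : P2, (f1 ∘ₗ a2) x ∈ LinearMap.range b2 := by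
        intro x
        rw [hex2', LinearMap.mem_ker, LinearMap.comp_apply, hmem' (a2 x), hc x, map_zero]
      set e := LinearEquiv.ofInjective b2 hinj' with he
      set g22 : P2 →ₗ[Bᵐᵒᵖ] Q2 :=
        e.symm.toLinearMap ∘ₗ LinearMap.codRestrict (LinearMap.range b2) (f1 ∘ₗ a2) hr
        with hg22def
      have hg22 : ∀ x, b2 (g22 x) = f1 (a2 x) := by
        intro x
        have h1 : b2 (g22 x) = ((e (e.symm ⟨f1 (a2 x), hr x⟩)) : Q1) := rfl
        rw [h1, e.apply_symm_apply]
      set f0 : (P0 × P2) →ₗ[Bᵐᵒᵖ] (Q0 × Q2) :=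
        LinearMap.prod ((g00 ∘ₗ LinearMap.fst Bᵐᵒᵖ P0 P2) + (g02 ∘ₗ LinearMap.snd Bᵐᵒᵖ P0 P2))
          (g22 ∘ₗ LinearMap.snd Bᵐᵒᵖ P0 P2) with hf0
      have hcond1 : ∀ x : P1, (CA b1 b2 hc').d1 (f1 x) = f0 ((CA a1 a2 hc).d1 x) := by
        intro x
        show ((b1 (f1 x), 0) : Q0 × Q2) = f0 (a1 x, 0)
        apply Prod.ext
        · show b1 (f1 x) = g00 (a1 x) + g02 0
          rw [map_zero, add_zero, hmem' x]
        · show (0 : Q2) = g22 0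
          rw [map_zero]
      have hcond2 : ∀ z : P0 × P2, (CA b1 b2 hc').d0 (f0 z) = f1 ((CA a1 a2 hc).d0 z) := by
        intro z
        show b2 (g22 z.2) = f1 (a2 z.2)
        exact hg22 z.2
      refine ⟨⟨(f1, f0), ⟨hcond1, hcond2⟩⟩, ?_⟩
      apply Prod.ext
      · show (LinearMap.fst Bᵐᵒᵖ Q0 Q2) ∘ₗ f0 ∘ₗ (LinearMap.inr Bᵐᵒᵖ P0 P2) = g02
        ext v
        show g00 0 + g02 v = g02 v
        rw [map_zero, zero_add]
      · apply Subtype.ext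
        apply Prod.ext
        · rfl
        show (LinearMap.fst Bᵐᵒᵖ Q0 Q2) ∘ₗ f0 ∘ₗ (LinearMap.inl Bᵐᵒᵖ P0 P2) = g00
        ext u
        show g00 u + g02 0 = g00 u
        rw [map_zero, add_zero]
  have step1 : Nat.card ((CA a1 a2 hc).Hom (CA b1 b2 hc')) =
      Nat.card (P2 →ₗ[Bᵐᵒᵖ] Q0) * Nat.card δ.ker := by
    rw [Nat.card_congr (Equiv.ofBijective F hFbij), Nat.card_prod]
  -- Step 2 : count ker δ by projecting to the second component
  set π2 : δ.ker →+ (P0 →ₗ[Bᵐᵒᵖ] Q0) :=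
    (AddMonoidHom.snd (P1 →ₗ[Bᵐᵒᵖ] Q1) (P0 →ₗ[Bᵐᵒᵖ] Q0)).comp δ.ker.subtype with hπ2
  have hπ2app : ∀ p : δ.ker, π2 p = p.val.2 := fun p => rfl
  have step2 : Nat.card δ.ker = Nat.card (P1 →ₗ[Bᵐᵒᵖ] Q2) * Nat.card π2.range := by
    rw [my_card_ker_mul_card_range π2]
    congr 1
    rw [← my_card_subtype_comp (P := P1) b2 hinj']
    apply Nat.card_congr
    refine ⟨fun p => ⟨p.val.val.1, ?_⟩, fun f => ⟨⟨(f.val, 0), ?_⟩, ?_⟩, ?_, ?_⟩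
    · intro x
      rw [hex2', LinearMap.mem_ker]
      have hm := (mem_ker_δ p.val.val).1 p.val.prop x
      have h0 : p.val.val.2 = 0 := p.prop
      rw [hm, h0]
      rfl
    · rw [mem_ker_δ]
      intro x
      obtain ⟨w, hw⟩ := f.prop x
      show b1 (f.val x) = (0 : P0 →ₗ[Bᵐᵒᵖ] Q0) (a1 x)
      rw [← hw, hc' w, LinearMap.zero_apply]
    · exact rfl
    · intro p
      apply Subtype.ext
      apply Subtype.ext
      refine Prod.ext rfl ?_
      exact p.prop.symm
    · intro f
      exact Subtype.ext rfl
  -- Step 3 : count the range of π2 via the induced map on homology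
  set eA : (P0 ⧸ LinearMap.ker a0) ≃ₗ[Bᵐᵒᵖ] A1 := a0.quotKerEquivOfSurjective hsurj with heA
  have heAmk : ∀ x : P0, eA.symm (a0 x) = Submodule.Quotient.mk x := by
    intro x
    rw [LinearEquiv.symm_apply_eq]
    rfl
  have hle : ∀ g : π2.range, LinearMap.ker a0 ≤ LinearMap.ker (b0 ∘ₗ g.val) := by
    intro g x hx
    rw [← hex1] at hx
    obtain ⟨y, hy⟩ := hx
    obtain ⟨p, hp⟩ := g.prop
    have hm := (mem_ker_δ p.val).1 p.prop y
    rw [hπ2app] at hp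
    have hgv : (g : P0 →ₗ[Bᵐᵒᵖ] Q0) (a1 y) = b1 (p.val.1 y) := by
      rw [← hp, hm]
    show b0 ((g : P0 →ₗ[Bᵐᵒᵖ] Q0) x) = 0
    rw [← hy, hgv, hb10]
  set Ψfun : π2.range → (A1 →ₗ[Bᵐᵒᵖ] A2) :=
    fun g => Submodule.liftQ (LinearMap.ker a0) (b0 ∘ₗ g.val) (hle g) ∘ₗ
      (eA.symm : A1 →ₗ[Bᵐᵒᵖ] (P0 ⧸ LinearMap.ker a0)) with hΨfun
  have key : ∀ (g : π2.range) (x : P0), Ψfun g (a0 x) = b0 (g.val x) := by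
    intro g x
    rw [hΨfun]
    simp only [LinearMap.comp_apply, LinearEquiv.coe_coe]
    rw [heAmk, Submodule.liftQ_apply, LinearMap.comp_apply]
  set Ψ : π2.range →+ (A1 →ₗ[Bᵐᵒᵖ] A2) := AddMonoidHom.mk' Ψfun (by
    intro g g'
    ext y
    obtain ⟨x, rfl⟩ := hsurj y
    rw [LinearMap.add_apply, key, key, key]
    have : ((g + g' : π2.range) : P0 →ₗ[Bᵐᵒᵖ] Q0) = g.val + g'.val := rfl
    rw [this, LinearMap.add_apply, map_add]) with hΨ
  have hΨapp : ∀ g : π2.range, Ψ g = Ψfun g := fun g => rfl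
  have hΨsurj : Surjective Ψ := by
    intro h
    obtain ⟨g, hg⟩ := my_exists_lift hproj0 b0 (h ∘ₗ a0) (fun x => hsurj' ((h ∘ₗ a0) x))
    have hmem1 : ∀ x, (g ∘ₗ a1) x ∈ LinearMap.range b1 := by
      intro x
      rw [hex1', LinearMap.mem_ker]
      have h1 := LinearMap.congr_fun hg (a1 x)
      rw [LinearMap.comp_apply] at h1
      rw [LinearMap.comp_apply, h1]
      have h2 : a0 (a1 x) = 0 := by
        have : a1 x ∈ LinearMap.ker a0 := hex1 ▸ ⟨x, rfl⟩
        exact this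
      rw [LinearMap.comp_apply, h2, map_zero]
    obtain ⟨f, hf⟩ := my_exists_lift hproj1 b1 (g ∘ₗ a1) hmem1
    have hδm : (f, g) ∈ δ.ker := by
      rw [mem_ker_δ]
      intro x
      exact LinearMap.congr_fun hf x
    refine ⟨⟨g, ⟨⟨(f, g), hδm⟩, rfl⟩⟩, ?_⟩
    ext y
    obtain ⟨x, rfl⟩ := hsurj y
    rw [hΨapp, key]
    exact LinearMap.congr_fun hg x
  have hkerΨ : Nat.card Ψ.ker =
      Nat.card {g : P0 →ₗ[Bᵐᵒᵖ] Q0 // ∀ x, g x ∈ LinearMap.range b1} := by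
    apply Nat.card_congr
    refine ⟨fun p => ⟨p.val.val, ?_⟩, fun g => ⟨⟨g.val, ?_⟩, ?_⟩, ?_, ?_⟩
    · intro x
      rw [hex1', LinearMap.mem_ker]
      have h0 : Ψ p.val = 0 := p.prop
      have := key p.val x
      rw [hΨapp] at h0
      rw [← this, h0]
      rfl
    · have hmem1 : ∀ x, (g.val ∘ₗ a1) x ∈ LinearMap.range b1 := fun x => g.prop (a1 x)
      obtain ⟨f, hf⟩ := my_exists_lift hproj1 b1 (g.val ∘ₗ a1) hmem1
      exact ⟨⟨(f, g.val), (mem_ker_δ _).2 (fun x => LinearMap.congr_fun hf x)⟩, rfl⟩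
    · show Ψ _ = 0
      rw [hΨapp]
      ext y
      obtain ⟨x, rfl⟩ := hsurj y
      rw [key]
      obtain ⟨w, hw⟩ := g.prop x
      show b0 (g.val x) = (0 : A1 →ₗ[Bᵐᵒᵖ] A2) (a0 x)
      rw [← hw, hb10, LinearMap.zero_apply]
    · intro p
      exact Subtype.ext (Subtype.ext rfl)
    · intro g
      exact Subtype.ext rfl
  have step3 : Nat.card π2.range =
      Nat.card {g : P0 →ₗ[Bᵐᵒᵖ] Q0 // ∀ x, g x ∈ LinearMap.range b1} *
        Nat.card (A1 →ₗ[Bᵐᵒᵖ] A2) := by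
    rw [my_card_ker_mul_card_range Ψ, hkerΨ]
    congr 1
    apply Nat.card_congr
    exact ⟨fun x => x.val, fun y => ⟨y, hΨsurj y⟩, fun x => Subtype.ext rfl, fun y => rfl⟩
  -- Step 4 : |Hom(P0,Q1)| = |Hom(P0,Q2)| ⬝ |K|
  set Φ : (P0 →ₗ[Bᵐᵒᵖ] Q1) →+ (P0 →ₗ[Bᵐᵒᵖ] Q0) :=
    AddMonoidHom.mk' (fun g => b1 ∘ₗ g) (by
      intro g g'
      ext x
      simp [LinearMap.comp_apply]) with hΦ
  have step4 : Nat.card (P0 →ₗ[Bᵐᵒᵖ] Q1) = Nat.card (P0 →ₗ[Bᵐᵒᵖ] Q2) *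
      Nat.card {g : P0 →ₗ[Bᵐᵒᵖ] Q0 // ∀ x, g x ∈ LinearMap.range b1} := by
    rw [my_card_ker_mul_card_range Φ]
    congr 1
    · rw [← my_card_subtype_comp (P := P0) b2 hinj']
      apply Nat.card_congr
      apply Equiv.subtypeEquivRight
      intro g
      rw [AddMonoidHom.mem_ker, hΦ]
      simp only [AddMonoidHom.mk'_apply]
      constructor
      · intro h x
        rw [hex2', LinearMap.mem_ker]
        exact LinearMap.congr_fun h x
      · intro h
        ext x
        have := h x
        rw [hex2', LinearMap.mem_ker] at this
        exact this
    · apply Nat.card_congr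
      apply Equiv.subtypeEquivRight
      intro g
      constructor
      · rintro ⟨f, rfl⟩ x
        exact ⟨f x, rfl⟩
      · intro h
        obtain ⟨f, hf⟩ := my_exists_lift hproj0 b1 g h
        exact ⟨f, hf⟩
  -- Conclusion
  rw [step1, step2, step3, step4]
  ring
end

section
/- Let B be a finite-dimensional algebra over k = F_q of finite global dimension, and let M•, N• be 2-periodic complexes of finite-dimensional projective right B-modules. Then there is an isomorphism of abelian groups Ext^1_{C_2(mod B)}(N•, M•) ≅ Hom_{K_2(mod B)}(N•, M•*), where K_2(mod B) is the homotopy category of 2-periodic complexes and M•* is the shift of M•. -/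
open Function

namespace Cplx2

variable {B : Type} [Ring B]

/-- Two morphisms of 2-periodic complexes are homotopic. -/
def Homotopic {C D : Cplx2 B} (f g : C.Hom D) : Prop :=
  ∃ (h1 : C.X1 →ₗ[Bᵐᵒᵖ] D.X0) (h0 : C.X0 →ₗ[Bᵐᵒᵖ] D.X1),
    (∀ x, g.val.1 x - f.val.1 x = D.d0 (h1 x) + h0 (C.d1 x)) ∧
    (∀ x, g.val.2 x - f.val.2 x = D.d1 (h0 x) + h1 (C.d0 x))

/-- The subgroup of null-homotopic morphisms of 2-periodic complexes. -/
def nullHomotopic (C D : Cplx2 B) : AddSubgroup (C.Hom D) where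
  carrier := {F | ∃ (h1 : C.X1 →ₗ[Bᵐᵒᵖ] D.X0) (h0 : C.X0 →ₗ[Bᵐᵒᵖ] D.X1),
    (∀ x, F.val.1 x = D.d0 (h1 x) + h0 (C.d1 x)) ∧
    (∀ x, F.val.2 x = D.d1 (h0 x) + h1 (C.d0 x))}
  add_mem' := by
    rintro a b ⟨h1, h0, H1, H0⟩ ⟨g1, g0, G1, G0⟩
    refine ⟨h1 + g1, h0 + g0, fun x => ?_, fun x => ?_⟩
    · show a.val.1 x + b.val.1 x = _
      rw [H1 x, G1 x]; simp only [LinearMap.add_apply, map_add]; abel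
    · show a.val.2 x + b.val.2 x = _
      rw [H0 x, G0 x]; simp only [LinearMap.add_apply, map_add]; abel
  zero_mem' := ⟨0, 0, fun x => by simp, fun x => by simp⟩
  neg_mem' := by
    rintro a ⟨h1, h0, H1, H0⟩
    refine ⟨-h1, -h0, fun x => ?_, fun x => ?_⟩
    · show -(a.val.1 x) = _
      rw [H1 x]; simp only [LinearMap.neg_apply, map_neg]; abel
    · show -(a.val.2 x) = _
      rw [H0 x]; simp only [LinearMap.neg_apply, map_neg]; abel

/-- Hom groups in the homotopy category `K_2(mod B)` of 2-periodic complexes: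
morphisms modulo null-homotopic ones. -/
abbrev HomK2 (C D : Cplx2 B) := C.Hom D ⧸ C.nullHomotopic D

end Cplx2

/-- A short exact sequence `0 → D → W → C → 0` of 2-periodic complexes;
these represent classes in `Ext¹_{C_2(mod B)}(C, D)`. -/
structure Cplx2Ext {B : Type} [Ring B] (C D : Cplx2 B) : Type 1 where
  W : Cplx2 B
  i : D.Hom W
  p : W.Hom C
  inj1 : Injective i.val.1
  inj0 : Injective i.val.2
  surj1 : Surjective p.val.1
  surj0 : Surjective p.val.2
  ex1 : LinearMap.range i.val.1 = LinearMap.ker p.val.1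
  ex0 : LinearMap.range i.val.2 = LinearMap.ker p.val.2

/-- Equivalence of short exact sequences of 2-periodic complexes: an isomorphism of
the middle terms restricting to the identity on both end terms. -/
def Cplx2ExtEquiv {B : Type} [Ring B] {C D : Cplx2 B} (E E' : Cplx2Ext C D) : Prop :=
  ∃ φ : E.W.Hom E'.W, Bijective φ.val.1 ∧ Bijective φ.val.2 ∧
    φ.comp E.i = E'.i ∧ E'.p.comp φ = E.p

section Aux

variable {R : Type*} [Ring R] {W M₀ N₀ : Type*}
  [AddCommGroup W] [AddCommGroup M₀] [AddCommGroup N₀]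
  [Module R W] [Module R M₀] [Module R N₀]

noncomputable def retr (i : M₀ →ₗ[R] W) (p : W →ₗ[R] N₀) (s : N₀ →ₗ[R] W)
    (hinj : Injective i) (hex : LinearMap.range i = LinearMap.ker p)
    (hs : ∀ x, p (s x) = x) : W →ₗ[R] M₀ :=
  (LinearEquiv.ofInjective i hinj).symm.toLinearMap ∘ₗ
    (LinearMap.id - s ∘ₗ p).codRestrict (LinearMap.range i) (fun w => by
      rw [hex]
      simp [LinearMap.mem_ker, map_sub, hs])

lemma retr_spec (i : M₀ →ₗ[R] W) (p : W →ₗ[R] N₀) (s : N₀ →ₗ[R] W)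
    (hinj : Injective i) (hex : LinearMap.range i = LinearMap.ker p)
    (hs : ∀ x, p (s x) = x) (w : W) :
    i (retr i p s hinj hex hs w) = w - s (p w) := by
  have key : ∀ y : LinearMap.range i, i ((LinearEquiv.ofInjective i hinj).symm y) = (y : W) := by
    intro y
    conv_rhs => rw [← (LinearEquiv.ofInjective i hinj).apply_symm_apply y]
    rw [LinearEquiv.ofInjective_apply]
  simpa [retr] using key _

lemma retr_i (i : M₀ →ₗ[R] W) (p : W →ₗ[R] N₀) (s : N₀ →ₗ[R] W)
    (hinj : Injective i) (hex : LinearMap.range i = LinearMap.ker p)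
    (hs : ∀ x, p (s x) = x) (m : M₀) :
    retr i p s hinj hex hs (i m) = m := by
  apply hinj
  rw [retr_spec]
  have : p (i m) = 0 := by
    rw [← LinearMap.mem_ker, ← hex]; exact ⟨m, rfl⟩
  rw [this]; simp

end Aux

namespace Cplx2

variable {B : Type} [Ring B] {M N : Cplx2 B}

/-- First component of a morphism `N → M*`, seen as a map `N₁ → M₀`. -/
def f1 (f : N.Hom M.shift) : N.X1 →ₗ[Bᵐᵒᵖ] M.X0 := f.val.1

/-- Second component of a morphism `N → M*`, seen as a map `N₀ → M₁`. -/
def f0 (f : N.Hom M.shift) : N.X0 →ₗ[Bᵐᵒᵖ] M.X1 := f.val.2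

lemma fprop1 (f : N.Hom M.shift) (x : N.X1) : M.d0 (f1 f x) = - f0 f (N.d1 x) := by
  have h := f.prop.1 x
  simp only [shift, LinearMap.neg_apply] at h
  simp only [f1, f0]
  exact neg_eq_iff_eq_neg.mp h

lemma fprop0 (f : N.Hom M.shift) (x : N.X0) : M.d1 (f0 f x) = - f1 f (N.d0 x) := by
  have h := f.prop.2 x
  simp only [shift, LinearMap.neg_apply] at h
  simp only [f1, f0]
  exact neg_eq_iff_eq_neg.mp h

/-- The middle term of the extension associated to a morphism `f : N → M*`. -/
def cone (f : N.Hom M.shift) : Cplx2 B where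
  X1 := ModuleCat.of Bᵐᵒᵖ (M.X1 × N.X1)
  X0 := ModuleCat.of Bᵐᵒᵖ (M.X0 × N.X0)
  d1 := ((M.d1.comp (LinearMap.fst _ _ _)) + ((f1 f).comp (LinearMap.snd _ _ _))).prod
    (N.d1.comp (LinearMap.snd _ _ _))
  d0 := ((M.d0.comp (LinearMap.fst _ _ _)) + ((f0 f).comp (LinearMap.snd _ _ _))).prod
    (N.d0.comp (LinearMap.snd _ _ _))
  h01 := fun x => by
    refine Prod.ext ?_ ?_
    · show M.d0 (M.d1 x.1 + f1 f x.2) + f0 f (N.d1 x.2) = 0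
      rw [map_add, M.h01, fprop1]; abel
    · show N.d0 (N.d1 x.2) = 0
      exact N.h01 x.2
  h10 := fun x => by
    refine Prod.ext ?_ ?_
    · show M.d1 (M.d0 x.1 + f0 f x.2) + f1 f (N.d0 x.2) = 0
      rw [map_add, M.h10, fprop0]; abel
    · show N.d1 (N.d0 x.2) = 0
      exact N.h10 x.2


/-- The inclusion `M → cone f`. -/
def coneI (f : N.Hom M.shift) : M.Hom (cone f) :=
  ⟨(LinearMap.inl Bᵐᵒᵖ M.X1 N.X1, LinearMap.inl Bᵐᵒᵖ M.X0 N.X0), ⟨fun x => by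
    show (M.d1 x + f1 f 0, N.d1 0) = (M.d1 x, (0 : N.X0))
    simp, fun x => by
    show (M.d0 x + f0 f 0, N.d0 0) = (M.d0 x, (0 : N.X1))
    simp⟩⟩

/-- The projection `cone f → N`. -/
def coneP (f : N.Hom M.shift) : (cone f).Hom N :=
  ⟨(LinearMap.snd Bᵐᵒᵖ M.X1 N.X1, LinearMap.snd Bᵐᵒᵖ M.X0 N.X0),
    ⟨fun _ => rfl, fun _ => rfl⟩⟩

lemma range_inl_eq_ker_snd {A C : Type} [AddCommGroup A] [AddCommGroup C]
    [Module Bᵐᵒᵖ A] [Module Bᵐᵒᵖ C] :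
    LinearMap.range (LinearMap.inl Bᵐᵒᵖ A C) = LinearMap.ker (LinearMap.snd Bᵐᵒᵖ A C) := by
  ext x
  constructor
  · rintro ⟨m, rfl⟩; simp [LinearMap.mem_ker]
  · intro hx
    exact ⟨x.1, by ext <;> simp_all [LinearMap.mem_ker, LinearMap.snd_apply]⟩

/-- The extension of `N` by `M` associated to a morphism `f : N → M*`. -/
def coneExt (f : N.Hom M.shift) : Cplx2Ext N M where
  W := cone f
  i := coneI f
  p := coneP f
  inj1 := LinearMap.inl_injective
  inj0 := LinearMap.inl_injective
  surj1 := fun n => ⟨(0, n), rfl⟩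
  surj0 := fun n => ⟨(0, n), rfl⟩
  ex1 := range_inl_eq_ker_snd
  ex0 := range_inl_eq_ker_snd

section Split

set_option linter.unusedVariables false

variable (E : Cplx2Ext N M)

/-- The connecting map `N₁ → M₀` of an extension with a chosen splitting. -/
noncomputable def sg1 (s1 : N.X1 →ₗ[Bᵐᵒᵖ] E.W.X1) (s0 : N.X0 →ₗ[Bᵐᵒᵖ] E.W.X0)
    (hs1 : ∀ x, E.p.val.1 (s1 x) = x) (hs0 : ∀ x, E.p.val.2 (s0 x) = x) :
    N.X1 →ₗ[Bᵐᵒᵖ] M.X0 :=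
  (retr E.i.val.2 E.p.val.2 s0 E.inj0 E.ex0 hs0) ∘ₗ E.W.d1 ∘ₗ s1

/-- The connecting map `N₀ → M₁` of an extension with a chosen splitting. -/
noncomputable def sg0 (s1 : N.X1 →ₗ[Bᵐᵒᵖ] E.W.X1) (s0 : N.X0 →ₗ[Bᵐᵒᵖ] E.W.X0)
    (hs1 : ∀ x, E.p.val.1 (s1 x) = x) (hs0 : ∀ x, E.p.val.2 (s0 x) = x) :
    N.X0 →ₗ[Bᵐᵒᵖ] M.X1 :=
  (retr E.i.val.1 E.p.val.1 s1 E.inj1 E.ex1 hs1) ∘ₗ E.W.d0 ∘ₗ s0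

lemma sg1_spec (s1 : N.X1 →ₗ[Bᵐᵒᵖ] E.W.X1) (s0 : N.X0 →ₗ[Bᵐᵒᵖ] E.W.X0)
    (hs1 : ∀ x, E.p.val.1 (s1 x) = x) (hs0 : ∀ x, E.p.val.2 (s0 x) = x) (n : N.X1) :
    E.i.val.2 (sg1 E s1 s0 hs1 hs0 n) = E.W.d1 (s1 n) - s0 (N.d1 n) := by
  have hp : E.p.val.2 (E.W.d1 (s1 n)) = N.d1 n := by
    rw [← E.p.prop.1 (s1 n), hs1]
  simp only [sg1, LinearMap.coe_comp, Function.comp_apply]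
  rw [retr_spec, hp]

lemma sg0_spec (s1 : N.X1 →ₗ[Bᵐᵒᵖ] E.W.X1) (s0 : N.X0 →ₗ[Bᵐᵒᵖ] E.W.X0)
    (hs1 : ∀ x, E.p.val.1 (s1 x) = x) (hs0 : ∀ x, E.p.val.2 (s0 x) = x) (n : N.X0) :
    E.i.val.1 (sg0 E s1 s0 hs1 hs0 n) = E.W.d0 (s0 n) - s1 (N.d0 n) := by
  have hp : E.p.val.1 (E.W.d0 (s0 n)) = N.d0 n := by
    rw [← E.p.prop.2 (s0 n), hs0]
  simp only [sg0, LinearMap.coe_comp, Function.comp_apply]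
  rw [retr_spec, hp]

lemma sg_cond1 (s1 : N.X1 →ₗ[Bᵐᵒᵖ] E.W.X1) (s0 : N.X0 →ₗ[Bᵐᵒᵖ] E.W.X0)
    (hs1 : ∀ x, E.p.val.1 (s1 x) = x) (hs0 : ∀ x, E.p.val.2 (s0 x) = x) (x : N.X1) :
    - M.d0 (sg1 E s1 s0 hs1 hs0 x) = sg0 E s1 s0 hs1 hs0 (N.d1 x) := by
  apply E.inj1
  rw [map_neg, ← E.i.prop.2, sg1_spec E s1 s0 hs1 hs0, map_sub, sg0_spec E s1 s0 hs1 hs0]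
  have h1 : E.W.d0 (E.W.d1 (s1 x)) = 0 := E.W.h01 _
  have h2 : s1 (N.d0 (N.d1 x)) = 0 := by rw [N.h01]; simp
  rw [h1, h2]
  abel

lemma sg_cond0 (s1 : N.X1 →ₗ[Bᵐᵒᵖ] E.W.X1) (s0 : N.X0 →ₗ[Bᵐᵒᵖ] E.W.X0)
    (hs1 : ∀ x, E.p.val.1 (s1 x) = x) (hs0 : ∀ x, E.p.val.2 (s0 x) = x) (x : N.X0) :
    - M.d1 (sg0 E s1 s0 hs1 hs0 x) = sg1 E s1 s0 hs1 hs0 (N.d0 x) := by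
  apply E.inj0
  rw [map_neg, ← E.i.prop.1, sg0_spec E s1 s0 hs1 hs0, map_sub, sg1_spec E s1 s0 hs1 hs0]
  have h1 : E.W.d1 (E.W.d0 (s0 x)) = 0 := E.W.h10 _
  have h2 : s0 (N.d1 (N.d0 x)) = 0 := by rw [N.h10]; simp
  rw [h1, h2]
  abel

/-- The morphism `N → M*` associated to an extension with a chosen splitting. -/
noncomputable def splitσ (s1 : N.X1 →ₗ[Bᵐᵒᵖ] E.W.X1) (s0 : N.X0 →ₗ[Bᵐᵒᵖ] E.W.X0)
    (hs1 : ∀ x, E.p.val.1 (s1 x) = x) (hs0 : ∀ x, E.p.val.2 (s0 x) = x) :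
    N.Hom M.shift :=
  ⟨(sg1 E s1 s0 hs1 hs0, sg0 E s1 s0 hs1 hs0),
    ⟨fun x => by
      show - M.d0 (sg1 E s1 s0 hs1 hs0 x) = sg0 E s1 s0 hs1 hs0 (N.d1 x)
      exact sg_cond1 E s1 s0 hs1 hs0 x,
     fun x => by
      show - M.d1 (sg0 E s1 s0 hs1 hs0 x) = sg1 E s1 s0 hs1 hs0 (N.d0 x)
      exact sg_cond0 E s1 s0 hs1 hs0 x⟩⟩

lemma splitσ_sub_mem (s1 s1' : N.X1 →ₗ[Bᵐᵒᵖ] E.W.X1) (s0 s0' : N.X0 →ₗ[Bᵐᵒᵖ] E.W.X0)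
    (hs1 : ∀ x, E.p.val.1 (s1 x) = x) (hs0 : ∀ x, E.p.val.2 (s0 x) = x)
    (hs1' : ∀ x, E.p.val.1 (s1' x) = x) (hs0' : ∀ x, E.p.val.2 (s0' x) = x) :
    splitσ E s1' s0' hs1' hs0' - splitσ E s1 s0 hs1 hs0 ∈ N.nullHomotopic M.shift := by
  set a1 : N.X1 →ₗ[Bᵐᵒᵖ] M.X1 :=
    (retr E.i.val.1 E.p.val.1 s1 E.inj1 E.ex1 hs1) ∘ₗ (s1' - s1) with ha1def
  set a0 : N.X0 →ₗ[Bᵐᵒᵖ] M.X0 :=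
    (retr E.i.val.2 E.p.val.2 s0 E.inj0 E.ex0 hs0) ∘ₗ (s0' - s0) with ha0def
  have ha1 : ∀ n, E.i.val.1 (a1 n) = s1' n - s1 n := by
    intro n
    simp only [ha1def, LinearMap.coe_comp, Function.comp_apply, LinearMap.sub_apply]
    rw [retr_spec, map_sub, hs1, hs1']
    simp
  have ha0 : ∀ n, E.i.val.2 (a0 n) = s0' n - s0 n := by
    intro n
    simp only [ha0def, LinearMap.coe_comp, Function.comp_apply, LinearMap.sub_apply]
    rw [retr_spec, map_sub, hs0, hs0']
    simp
  refine ⟨-a1, -a0, fun x => ?_, fun x => ?_⟩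
  · show sg1 E s1' s0' hs1' hs0' x - sg1 E s1 s0 hs1 hs0 x
      = - M.d1 (- (a1 x)) + - (a0 (N.d1 x))
    apply E.inj0
    simp only [map_add, map_neg, map_sub, neg_neg]
    rw [sg1_spec E s1' s0' hs1' hs0', sg1_spec E s1 s0 hs1 hs0, ← E.i.prop.1, ha1, ha0,
      map_sub]
    abel
  · show sg0 E s1' s0' hs1' hs0' x - sg0 E s1 s0 hs1 hs0 x
      = - M.d0 (- (a0 x)) + - (a1 (N.d0 x))
    apply E.inj1
    simp only [map_add, map_neg, map_sub, neg_neg]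
    rw [sg0_spec E s1' s0' hs1' hs0', sg0_spec E s1 s0 hs1 hs0, ← E.i.prop.2, ha0, ha1,
      map_sub]
    abel

lemma splitσ_congr (E' : Cplx2Ext N M) (φ : E.W.Hom E'.W)
    (hφi : φ.comp E.i = E'.i)
    (s1 : N.X1 →ₗ[Bᵐᵒᵖ] E.W.X1) (s0 : N.X0 →ₗ[Bᵐᵒᵖ] E.W.X0)
    (hs1 : ∀ x, E.p.val.1 (s1 x) = x) (hs0 : ∀ x, E.p.val.2 (s0 x) = x)
    (hs1' : ∀ x, E'.p.val.1 ((φ.val.1 ∘ₗ s1) x) = x)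
    (hs0' : ∀ x, E'.p.val.2 ((φ.val.2 ∘ₗ s0) x) = x) :
    splitσ E' (φ.val.1 ∘ₗ s1) (φ.val.2 ∘ₗ s0) hs1' hs0' = splitσ E s1 s0 hs1 hs0 := by
  have hi1 : ∀ m, φ.val.1 (E.i.val.1 m) = E'.i.val.1 m := fun m =>
    DFunLike.congr_fun (congrArg (fun g => g.val.1) hφi) m
  have hi0 : ∀ m, φ.val.2 (E.i.val.2 m) = E'.i.val.2 m := fun m =>
    DFunLike.congr_fun (congrArg (fun g => g.val.2) hφi) m
  apply Subtype.ext
  apply Prod.ext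
  · apply LinearMap.ext; intro n
    show sg1 E' (φ.val.1 ∘ₗ s1) (φ.val.2 ∘ₗ s0) hs1' hs0' n = sg1 E s1 s0 hs1 hs0 n
    apply E'.inj0
    rw [sg1_spec, ← hi0, sg1_spec, map_sub]
    simp only [LinearMap.coe_comp, Function.comp_apply]
    rw [φ.prop.1]
  · apply LinearMap.ext; intro n
    show sg0 E' (φ.val.1 ∘ₗ s1) (φ.val.2 ∘ₗ s0) hs1' hs0' n = sg0 E s1 s0 hs1 hs0 n
    apply E'.inj1
    rw [sg0_spec, ← hi1, sg0_spec, map_sub]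
    simp only [LinearMap.coe_comp, Function.comp_apply]
    rw [φ.prop.2]

/-- On a cone extension with the canonical splitting, `splitσ` recovers `f`. -/
lemma splitσ_cone (f : N.Hom M.shift) :
    splitσ (coneExt f) (LinearMap.inr Bᵐᵒᵖ M.X1 N.X1) (LinearMap.inr Bᵐᵒᵖ M.X0 N.X0)
      (fun _ => rfl) (fun _ => rfl) = f := by
  apply Subtype.ext
  apply Prod.ext
  · apply LinearMap.ext; intro n
    show sg1 (coneExt f) (LinearMap.inr Bᵐᵒᵖ M.X1 N.X1) (LinearMap.inr Bᵐᵒᵖ M.X0 N.X0)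
      (fun _ => rfl) (fun _ => rfl) n = f.val.1 n
    apply (coneExt f).inj0
    refine (sg1_spec (coneExt f) _ _ _ _ n).trans ?_
    refine Prod.ext ?_ ?_
    · show M.d1 0 + f1 f n - 0 = f.val.1 n
      simp only [map_zero, zero_add, sub_zero]
      rfl
    · show N.d1 n - N.d1 n = (0 : N.X0)
      simp
  · apply LinearMap.ext; intro n
    show sg0 (coneExt f) (LinearMap.inr Bᵐᵒᵖ M.X1 N.X1) (LinearMap.inr Bᵐᵒᵖ M.X0 N.X0)
      (fun _ => rfl) (fun _ => rfl) n = f.val.2 n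
    apply (coneExt f).inj1
    refine (sg0_spec (coneExt f) _ _ _ _ n).trans ?_
    refine Prod.ext ?_ ?_
    · show M.d0 0 + f0 f n - 0 = f.val.2 n
      simp only [map_zero, zero_add, sub_zero]
      rfl
    · show N.d0 n - N.d0 n = (0 : N.X1)
      simp

/-- A chosen degree-1 splitting of an extension (using projectivity of `N₁`). -/
noncomputable def sc1 (hNp : N.Proj) (E : Cplx2Ext N M) : N.X1 →ₗ[Bᵐᵒᵖ] E.W.X1 :=
  (Module.projective_lifting_property (h := hNp.1) E.p.val.1 LinearMap.id E.surj1).choose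

lemma sc1_spec (hNp : N.Proj) (E : Cplx2Ext N M) (x : N.X1) :
    E.p.val.1 (sc1 hNp E x) = x :=
  LinearMap.congr_fun
    (Module.projective_lifting_property (h := hNp.1) E.p.val.1 LinearMap.id E.surj1).choose_spec x

/-- A chosen degree-0 splitting of an extension (using projectivity of `N₀`). -/
noncomputable def sc0 (hNp : N.Proj) (E : Cplx2Ext N M) : N.X0 →ₗ[Bᵐᵒᵖ] E.W.X0 :=
  (Module.projective_lifting_property (h := hNp.2) E.p.val.2 LinearMap.id E.surj0).choose

lemma sc0_spec (hNp : N.Proj) (E : Cplx2Ext N M) (x : N.X0) :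
    E.p.val.2 (sc0 hNp E x) = x :=
  LinearMap.congr_fun
    (Module.projective_lifting_property (h := hNp.2) E.p.val.2 LinearMap.id E.surj0).choose_spec x

/-- The class in `Hom_{K₂}(N, M*)` of an extension of `N` by `M`. -/
noncomputable def extClass (hNp : N.Proj) (E : Cplx2Ext N M) : N.HomK2 M.shift :=
  QuotientAddGroup.mk (splitσ E (sc1 hNp E) (sc0 hNp E) (sc1_spec hNp E) (sc0_spec hNp E))

lemma extClass_eq (hNp : N.Proj) (E : Cplx2Ext N M)
    (s1 : N.X1 →ₗ[Bᵐᵒᵖ] E.W.X1) (s0 : N.X0 →ₗ[Bᵐᵒᵖ] E.W.X0)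
    (hs1 : ∀ x, E.p.val.1 (s1 x) = x) (hs0 : ∀ x, E.p.val.2 (s0 x) = x) :
    extClass hNp E = QuotientAddGroup.mk (splitσ E s1 s0 hs1 hs0) := by
  rw [extClass, QuotientAddGroup.eq, neg_add_eq_sub]
  exact splitσ_sub_mem E (sc1 hNp E) s1 (sc0 hNp E) s0 (sc1_spec hNp E) (sc0_spec hNp E) hs1 hs0

lemma extClass_congr (hNp : N.Proj) (E E' : Cplx2Ext N M) (h : Cplx2ExtEquiv E E') :
    extClass hNp E = extClass hNp E' := by
  obtain ⟨φ, -, -, hφi, hφp⟩ := h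
  have hp1 : ∀ m, E'.p.val.1 (φ.val.1 m) = E.p.val.1 m := fun m =>
    DFunLike.congr_fun (congrArg (fun g => g.val.1) hφp) m
  have hp0 : ∀ m, E'.p.val.2 (φ.val.2 m) = E.p.val.2 m := fun m =>
    DFunLike.congr_fun (congrArg (fun g => g.val.2) hφp) m
  have hs1' : ∀ x, E'.p.val.1 ((φ.val.1 ∘ₗ sc1 hNp E) x) = x := fun x => by
    show E'.p.val.1 (φ.val.1 (sc1 hNp E x)) = x
    rw [hp1, sc1_spec]
  have hs0' : ∀ x, E'.p.val.2 ((φ.val.2 ∘ₗ sc0 hNp E) x) = x := fun x => by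
    show E'.p.val.2 (φ.val.2 (sc0 hNp E x)) = x
    rw [hp0, sc0_spec]
  rw [extClass_eq hNp E' (φ.val.1 ∘ₗ sc1 hNp E) (φ.val.2 ∘ₗ sc0 hNp E) hs1' hs0',
    splitσ_congr E E' φ hφi (sc1 hNp E) (sc0 hNp E) (sc1_spec hNp E) (sc0_spec hNp E) hs1' hs0']
  rfl

/-- Homotopic morphisms give equivalent cone extensions. -/
lemma coneExt_equiv_of_homotopic (f g : N.Hom M.shift) (h : -f + g ∈ N.nullHomotopic M.shift) :
    Cplx2ExtEquiv (coneExt f) (coneExt g) := by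
  obtain ⟨h1', h0', H1, H0⟩ := h
  let h1 : N.X1 →ₗ[Bᵐᵒᵖ] M.X1 := h1'
  let h0 : N.X0 →ₗ[Bᵐᵒᵖ] M.X0 := h0'
  have Hg1 : ∀ x, f1 g x = f1 f x + (-(M.d1 (h1 x)) + h0 (N.d1 x)) := by
    intro x
    have H' : -(f1 f x) + f1 g x = -(M.d1 (h1 x)) + h0 (N.d1 x) := H1 x
    rw [← H']; abel
  have Hg0 : ∀ x, f0 g x = f0 f x + (-(M.d0 (h0 x)) + h1 (N.d0 x)) := by
    intro x
    have H' : -(f0 f x) + f0 g x = -(M.d0 (h0 x)) + h1 (N.d0 x) := H0 x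
    rw [← H']; abel
  refine ⟨⟨((LinearMap.fst Bᵐᵒᵖ M.X1 N.X1 + h1 ∘ₗ LinearMap.snd Bᵐᵒᵖ M.X1 N.X1).prod
      (LinearMap.snd Bᵐᵒᵖ M.X1 N.X1),
      (LinearMap.fst Bᵐᵒᵖ M.X0 N.X0 + h0 ∘ₗ LinearMap.snd Bᵐᵒᵖ M.X0 N.X0).prod
      (LinearMap.snd Bᵐᵒᵖ M.X0 N.X0)), ⟨fun x => ?_, fun x => ?_⟩⟩, ?_, ?_, ?_, ?_⟩
  · refine Prod.ext ?_ rfl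
    show M.d1 (x.1 + h1 x.2) + f1 g x.2 = (M.d1 x.1 + f1 f x.2) + h0 (N.d1 x.2)
    rw [map_add, Hg1]; abel
  · refine Prod.ext ?_ rfl
    show M.d0 (x.1 + h0 x.2) + f0 g x.2 = (M.d0 x.1 + f0 f x.2) + h1 (N.d0 x.2)
    rw [map_add, Hg0]; abel
  · constructor
    · intro a b hab
      have hsnd := congrArg Prod.snd hab
      have hfst := congrArg Prod.fst hab
      have h2 : a.2 = b.2 := hsnd
      have h1'' : a.1 + h1 a.2 = b.1 + h1 b.2 := hfst
      refine Prod.ext ?_ h2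
      rwa [h2, add_left_inj] at h1''
    · intro y
      refine ⟨(y.1 - h1 y.2, y.2), ?_⟩
      refine Prod.ext ?_ rfl
      show y.1 - h1 y.2 + h1 y.2 = y.1
      abel
  · constructor
    · intro a b hab
      have hsnd := congrArg Prod.snd hab
      have hfst := congrArg Prod.fst hab
      have h2 : a.2 = b.2 := hsnd
      have h1'' : a.1 + h0 a.2 = b.1 + h0 b.2 := hfst
      refine Prod.ext ?_ h2
      rwa [h2, add_left_inj] at h1''
    · intro y
      refine ⟨(y.1 - h0 y.2, y.2), ?_⟩
      refine Prod.ext ?_ rfl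
      show y.1 - h0 y.2 + h0 y.2 = y.1
      abel
  · apply Subtype.ext; apply Prod.ext
    · apply LinearMap.ext; intro m
      refine Prod.ext ?_ rfl
      show m + h1 0 = m
      simp
    · apply LinearMap.ext; intro m
      refine Prod.ext ?_ rfl
      show m + h0 0 = m
      simp
  · apply Subtype.ext; apply Prod.ext
    · apply LinearMap.ext; intro x
      rfl
    · apply LinearMap.ext; intro x
      rfl

/-- The cone on the morphism associated to an extension is equivalent to
the extension itself. -/
lemma coneExt_splitσ_equiv (E : Cplx2Ext N M)
    (s1 : N.X1 →ₗ[Bᵐᵒᵖ] E.W.X1) (s0 : N.X0 →ₗ[Bᵐᵒᵖ] E.W.X0)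
    (hs1 : ∀ x, E.p.val.1 (s1 x) = x) (hs0 : ∀ x, E.p.val.2 (s0 x) = x) :
    Cplx2ExtEquiv (coneExt (splitσ E s1 s0 hs1 hs0)) E := by
  have pi1 : ∀ m, E.p.val.1 (E.i.val.1 m) = 0 := fun m =>
    LinearMap.mem_ker.mp (E.ex1 ▸ ⟨m, rfl⟩)
  have pi0 : ∀ m, E.p.val.2 (E.i.val.2 m) = 0 := fun m =>
    LinearMap.mem_ker.mp (E.ex0 ▸ ⟨m, rfl⟩)
  refine ⟨⟨(E.i.val.1.coprod s1, E.i.val.2.coprod s0), ⟨fun x => ?_, fun x => ?_⟩⟩,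
    ?_, ?_, ?_, ?_⟩
  · show E.W.d1 (E.i.val.1 x.1 + s1 x.2)
      = E.i.val.2 (M.d1 x.1 + sg1 E s1 s0 hs1 hs0 x.2) + s0 (N.d1 x.2)
    rw [map_add, map_add, E.i.prop.1, sg1_spec]
    abel
  · show E.W.d0 (E.i.val.2 x.1 + s0 x.2)
      = E.i.val.1 (M.d0 x.1 + sg0 E s1 s0 hs1 hs0 x.2) + s1 (N.d0 x.2)
    rw [map_add, map_add, E.i.prop.2, sg0_spec]
    abel
  · constructor
    · rw [injective_iff_map_eq_zero]
      intro a ha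
      have ha' : E.i.val.1 a.1 + s1 a.2 = 0 := ha
      have h2 : a.2 = 0 := by
        have h3 := congrArg (fun y => E.p.val.1 y) ha'
        simp only [map_add, map_zero, pi1, hs1, zero_add] at h3
        exact h3
      have h4 : a.1 = 0 := by
        apply E.inj1
        rw [h2] at ha'
        simpa using ha'
      exact Prod.ext h4 h2
    · intro w
      refine ⟨(retr E.i.val.1 E.p.val.1 s1 E.inj1 E.ex1 hs1 w, E.p.val.1 w), ?_⟩
      show E.i.val.1 (retr E.i.val.1 E.p.val.1 s1 E.inj1 E.ex1 hs1 w) + s1 (E.p.val.1 w) = w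
      rw [retr_spec]; abel
  · constructor
    · rw [injective_iff_map_eq_zero]
      intro a ha
      have ha' : E.i.val.2 a.1 + s0 a.2 = 0 := ha
      have h2 : a.2 = 0 := by
        have h3 := congrArg (fun y => E.p.val.2 y) ha'
        simp only [map_add, map_zero, pi0, hs0, zero_add] at h3
        exact h3
      have h4 : a.1 = 0 := by
        apply E.inj0
        rw [h2] at ha'
        simpa using ha'
      exact Prod.ext h4 h2
    · intro w
      refine ⟨(retr E.i.val.2 E.p.val.2 s0 E.inj0 E.ex0 hs0 w, E.p.val.2 w), ?_⟩
      show E.i.val.2 (retr E.i.val.2 E.p.val.2 s0 E.inj0 E.ex0 hs0 w) + s0 (E.p.val.2 w) = w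
      rw [retr_spec]; abel
  · apply Subtype.ext; apply Prod.ext
    · apply LinearMap.ext; intro m
      show E.i.val.1 m + s1 0 = E.i.val.1 m
      simp
    · apply LinearMap.ext; intro m
      show E.i.val.2 m + s0 0 = E.i.val.2 m
      simp
  · apply Subtype.ext; apply Prod.ext
    · apply LinearMap.ext; intro x
      show E.p.val.1 (E.i.val.1 x.1 + s1 x.2) = x.2
      rw [map_add, pi1, hs1, zero_add]
    · apply LinearMap.ext; intro x
      show E.p.val.2 (E.i.val.2 x.1 + s0 x.2) = x.2
      rw [map_add, pi0, hs0, zero_add]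

end Split

end Cplx2
/-- For `B` of finite global dimension and 2-periodic complexes
`M•`, `N•` of finite-dimensional projective right `B`-modules there is an
isomorphism `Ext¹_{C_2(mod B)}(N•, M•) ≅ Hom_{K_2(mod B)}(N•, M•*)`, where `Ext¹`
is realized by equivalence classes of short exact sequences of 2-periodic
complexes and the right-hand side is the hom group in the homotopy category. -/
theorem ext1_iso_hom_homotopy_shift
    (k : Type) [Field k] [Fintype k]
    (B : Type) [Ring B] [Algebra k B] [FiniteDimensional k B]
    (hgldim : ∃ n, GlobalDimLE B n)
    (M N : Cplx2 B) (hMp : M.Proj) (hNp : N.Proj) (hMf : M.FinDim) (hNf : N.FinDim) :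
    Nonempty (Quot (Cplx2ExtEquiv (C := N) (D := M)) ≃ Cplx2.HomK2 N M.shift) := by
  refine ⟨⟨Quot.lift (Cplx2.extClass hNp)
      (fun E E' h => Cplx2.extClass_congr hNp E E' h),
    Quotient.lift (fun f => Quot.mk _ (Cplx2.coneExt f))
      (fun a b hab => Quot.sound
        (Cplx2.coneExt_equiv_of_homotopic a b (QuotientAddGroup.leftRel_apply.mp hab))),
    ?_, ?_⟩⟩
  · intro q
    induction q using Quot.ind with
    | _ E =>
      exact Quot.sound (Cplx2.coneExt_splitσ_equiv E (Cplx2.sc1 hNp E) (Cplx2.sc0 hNp E)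
        (Cplx2.sc1_spec hNp E) (Cplx2.sc0_spec hNp E))
  · intro q
    induction q using Quotient.ind with
    | _ f =>
      show Cplx2.extClass hNp (Cplx2.coneExt f) = QuotientAddGroup.mk f
      rw [Cplx2.extClass_eq hNp (Cplx2.coneExt f) (LinearMap.inr Bᵐᵒᵖ M.X1 N.X1)
        (LinearMap.inr Bᵐᵒᵖ M.X0 N.X0) (fun _ => rfl) (fun _ => rfl), Cplx2.splitσ_cone]
end

section
/- Let B be a finite-dimensional algebra over k = F_q of global dimension at most 2, let B1, B2 be finite-dimensional right B-modules with associated 2-periodic complexes C_{B1}, C_{B2} built from minimal projective resolutions, and let M•, N• be acyclic 2-periodic complexes of finite-dimensional projective B-modules. If M• ⊕ C_{B1} ≅ N• ⊕ C_{B2} in C_2(mod B), then B1 ≅ B2 as B-modules. -/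
open Function

namespace Cplx2Aux

open Cplx2

variable {B : Type} [Ring B]

/-- An isomorphism of 2-periodic complexes induces an isomorphism on `H0`. -/
lemma iso_H0 {C D : Cplx2 B} (h : C.Iso D) : Nonempty (C.H0 ≃ₗ[Bᵐᵒᵖ] D.H0) := by
  obtain ⟨f, hf1, hf0⟩ := h
  have hker : ∀ x ∈ LinearMap.ker C.d0, f.val.2 x ∈ LinearMap.ker D.d0 := by
    intro x hx
    have := f.prop.2 x
    simp only [LinearMap.mem_ker] at hx ⊢
    rw [this, hx, map_zero]
  set K : LinearMap.ker C.d0 →ₗ[Bᵐᵒᵖ] LinearMap.ker D.d0 := f.val.2.restrict hker with hK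
  set Q := ((LinearMap.range D.d1).comap (LinearMap.ker D.d0).subtype).mkQ with hQ
  have hlift : ((LinearMap.range C.d1).comap (LinearMap.ker C.d0).subtype)
      ≤ LinearMap.ker (Q ∘ₗ K) := by
    rintro ⟨x, hx0⟩ hx
    obtain ⟨y, hy⟩ := hx
    simp only [LinearMap.mem_ker, LinearMap.comp_apply, hQ, Submodule.mkQ_apply,
      Submodule.Quotient.mk_eq_zero, Submodule.mem_comap, hK, LinearMap.restrict_apply,
      Submodule.coe_subtype]
    exact ⟨f.val.1 y, by rw [f.prop.1 y, hy]; rfl⟩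
  refine ⟨LinearEquiv.ofBijective (Submodule.liftQ _ (Q ∘ₗ K) hlift) ⟨?_, ?_⟩⟩
  · rw [← LinearMap.ker_eq_bot, eq_bot_iff]
    rintro z hz
    obtain ⟨⟨v, hv⟩, rfl⟩ := Submodule.Quotient.mk_surjective _ z
    simp only [LinearMap.mem_ker, Submodule.Quotient.mk''_eq_mk] at hz
    rw [Submodule.liftQ_apply] at hz
    simp only [LinearMap.comp_apply, hQ, Submodule.mkQ_apply,
      Submodule.Quotient.mk_eq_zero, Submodule.mem_comap, hK, LinearMap.restrict_apply,
      Submodule.coe_subtype] at hz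
    obtain ⟨y, hy⟩ := hz
    have hy2 : f.val.2 (C.d1 ((LinearEquiv.ofBijective f.val.1 hf1).symm y)) = f.val.2 v := by
      rw [← f.prop.1]
      have : f.val.1 ((LinearEquiv.ofBijective f.val.1 hf1).symm y) = y :=
        (LinearEquiv.ofBijective f.val.1 hf1).apply_symm_apply y
      rw [this, hy]
    have hv' : v ∈ LinearMap.range C.d1 :=
      ⟨(LinearEquiv.ofBijective f.val.1 hf1).symm y, hf0.injective hy2⟩
    simp only [Submodule.mem_bot]
    rw [Submodule.Quotient.mk_eq_zero]
    exact hv'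
  · rintro z
    obtain ⟨⟨w, hw⟩, rfl⟩ := Submodule.Quotient.mk_surjective _ z
    set v := (LinearEquiv.ofBijective f.val.2 hf0).symm w with hvdef
    have hfv : f.val.2 v = w := (LinearEquiv.ofBijective f.val.2 hf0).apply_symm_apply w
    have hv : v ∈ LinearMap.ker C.d0 := by
      have h1 : f.val.1 (C.d0 v) = 0 := by
        rw [← f.prop.2, hfv]
        simpa [LinearMap.mem_ker] using hw
      simp only [LinearMap.mem_ker]
      have := hf1.injective (a₁ := C.d0 v) (a₂ := 0)
      exact this (by simpa using h1)
    refine ⟨Submodule.Quotient.mk ⟨v, hv⟩, ?_⟩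
    rw [Submodule.liftQ_apply]
    simp only [LinearMap.comp_apply, hQ, Submodule.mkQ_apply]
    congr 1
    apply Subtype.ext
    simpa [hK, LinearMap.restrict_apply] using hfv

/-- Adding an acyclic complex does not change `H0`. -/
lemma dsum_H0 {C E : Cplx2 B} (hC : C.Acyclic) :
    Nonempty ((C.dsum E).H0 ≃ₗ[Bᵐᵒᵖ] E.H0) := by
  have hker : ∀ x ∈ LinearMap.ker (C.dsum E).d0,
      ((LinearMap.snd Bᵐᵒᵖ C.X0 E.X0) x) ∈ LinearMap.ker E.d0 := by
    rintro ⟨u, v⟩ hx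
    have : (C.d0 u, E.d0 v) = (0 : C.X1 × E.X1) := hx
    simpa [LinearMap.mem_ker] using congrArg Prod.snd this
  set K : LinearMap.ker (C.dsum E).d0 →ₗ[Bᵐᵒᵖ] LinearMap.ker E.d0 :=
    (LinearMap.snd Bᵐᵒᵖ C.X0 E.X0).restrict hker with hK
  set Q := ((LinearMap.range E.d1).comap (LinearMap.ker E.d0).subtype).mkQ with hQ
  have hlift : ((LinearMap.range (C.dsum E).d1).comap (LinearMap.ker (C.dsum E).d0).subtype)
      ≤ LinearMap.ker (Q ∘ₗ K) := by
    rintro ⟨⟨u, v⟩, hx0⟩ hx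
    obtain ⟨⟨y, z⟩, hy⟩ := hx
    have hy2 : E.d1 z = v := congrArg Prod.snd hy
    simp only [LinearMap.mem_ker, LinearMap.comp_apply, hQ, Submodule.mkQ_apply,
      Submodule.Quotient.mk_eq_zero, Submodule.mem_comap, hK, LinearMap.restrict_apply,
      Submodule.coe_subtype]
    exact (Submodule.Quotient.mk_eq_zero _).2 ⟨z, hy2⟩
  refine ⟨LinearEquiv.ofBijective (Submodule.liftQ _ (Q ∘ₗ K) hlift) ⟨?_, ?_⟩⟩
  · rw [← LinearMap.ker_eq_bot, eq_bot_iff]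
    rintro x hx
    obtain ⟨⟨⟨u, v⟩, huv⟩, rfl⟩ := Submodule.Quotient.mk_surjective _ x
    simp only [LinearMap.mem_ker, Submodule.Quotient.mk''_eq_mk] at hx
    rw [Submodule.liftQ_apply] at hx
    simp only [LinearMap.comp_apply, hQ, Submodule.mkQ_apply,
      Submodule.Quotient.mk_eq_zero, Submodule.mem_comap, hK, LinearMap.restrict_apply,
      Submodule.coe_subtype] at hx
    obtain ⟨z, hz⟩ := (Submodule.Quotient.mk_eq_zero _).1 hx
    have hu : u ∈ LinearMap.ker C.d0 := by
      have : (C.d0 u, E.d0 v) = (0 : C.X1 × E.X1) := huv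
      simpa [LinearMap.mem_ker] using congrArg Prod.fst this
    rw [← hC.1] at hu
    obtain ⟨y, hy⟩ := hu
    simp only [Submodule.mem_bot]
    rw [Submodule.Quotient.mk_eq_zero]
    exact ⟨(y, z), by
      show (C.d1 y, E.d1 z) = (u, v)
      rw [hy, hz]
      rfl⟩
  · rintro x
    obtain ⟨⟨w, hw⟩, rfl⟩ := Submodule.Quotient.mk_surjective _ x
    have hmem : ((0 : C.X0), w) ∈ LinearMap.ker (C.dsum E).d0 := by
      show (C.d0 0, E.d0 w) = (0 : C.X1 × E.X1)
      simp only [map_zero]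
      rw [show E.d0 w = 0 from hw]
      rfl
    refine ⟨Submodule.Quotient.mk ⟨((0 : C.X0), w), hmem⟩, ?_⟩
    rw [Submodule.liftQ_apply]
    simp only [LinearMap.comp_apply, hQ, Submodule.mkQ_apply]
    congr 1

/-- `H0` of the standard complex `C_A` is `A`. -/
lemma CA_H0 {A P0 P1 P2 : Type}
    [AddCommGroup A] [Module Bᵐᵒᵖ A]
    [AddCommGroup P0] [Module Bᵐᵒᵖ P0] [AddCommGroup P1] [Module Bᵐᵒᵖ P1]
    [AddCommGroup P2] [Module Bᵐᵒᵖ P2]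
    (a0 : P0 →ₗ[Bᵐᵒᵖ] A) (a1 : P1 →ₗ[Bᵐᵒᵖ] P0) (a2 : P2 →ₗ[Bᵐᵒᵖ] P1)
    (hinj : Injective a2) (hex1 : LinearMap.range a1 = LinearMap.ker a0)
    (hsurj : Surjective a0) (hc : ∀ x, a1 (a2 x) = 0) :
    Nonempty ((CA a1 a2 hc).H0 ≃ₗ[Bᵐᵒᵖ] A) := by
  set Cx := CA a1 a2 hc with hCx
  set K : LinearMap.ker Cx.d0 →ₗ[Bᵐᵒᵖ] A :=
    a0 ∘ₗ (LinearMap.fst Bᵐᵒᵖ P0 P2) ∘ₗ (LinearMap.ker Cx.d0).subtype with hK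
  have hlift : ((LinearMap.range Cx.d1).comap (LinearMap.ker Cx.d0).subtype)
      ≤ LinearMap.ker K := by
    rintro ⟨⟨u, v⟩, huv⟩ hx
    obtain ⟨y, hy⟩ := hx
    have hu : a1 y = u := congrArg Prod.fst hy
    simp only [LinearMap.mem_ker, hK, LinearMap.comp_apply, Submodule.coe_subtype]
    show a0 u = 0
    rw [← hu]
    have : a1 y ∈ LinearMap.ker a0 := hex1 ▸ LinearMap.mem_range_self a1 y
    simpa [LinearMap.mem_ker] using this
  refine ⟨LinearEquiv.ofBijective (Submodule.liftQ _ K hlift) ⟨?_, ?_⟩⟩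
  · rw [← LinearMap.ker_eq_bot, eq_bot_iff]
    rintro x hx
    obtain ⟨⟨⟨u, v⟩, huv⟩, rfl⟩ := Submodule.Quotient.mk_surjective _ x
    simp only [LinearMap.mem_ker, Submodule.Quotient.mk''_eq_mk] at hx
    rw [Submodule.liftQ_apply] at hx
    simp only [hK, LinearMap.comp_apply, Submodule.coe_subtype] at hx
    have hu : u ∈ LinearMap.ker a0 := hx
    rw [← hex1] at hu
    obtain ⟨y, hy⟩ := hu
    have hv : v = 0 := by
      have : a2 v = 0 := huv
      exact hinj (by simpa using this)
    simp only [Submodule.mem_bot]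
    rw [Submodule.Quotient.mk_eq_zero]
    exact ⟨y, by
      show ((a1 y, 0) : P0 × P2) = (u, v)
      rw [hy, hv]⟩
  · rintro a
    obtain ⟨u, hu⟩ := hsurj a
    have hmem : ((u, 0) : P0 × P2) ∈ LinearMap.ker Cx.d0 := by
      show a2 0 = 0
      simp
    refine ⟨Submodule.Quotient.mk ⟨((u, 0) : P0 × P2), hmem⟩, ?_⟩
    rw [Submodule.liftQ_apply]
    exact hu

end Cplx2Aux

/-- If `M• ⊕ C_{B1} ≅ N• ⊕ C_{B2}` with `M•`, `N•` acyclic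
2-periodic complexes of finite-dimensional projectives, then `B1 ≅ B2`. -/
theorem cancel_acyclic_summands
    (k : Type) [Field k] [Fintype k]
    (B : Type) [Ring B] [Algebra k B] [FiniteDimensional k B]
    (hgldim : GlobalDimLE B 2)
    (A1 P0 P1 P2 : Type)
    [AddCommGroup A1] [Module Bᵐᵒᵖ A1] [Module.Finite Bᵐᵒᵖ A1]
    [AddCommGroup P0] [Module Bᵐᵒᵖ P0] [Module.Finite Bᵐᵒᵖ P0]
    [AddCommGroup P1] [Module Bᵐᵒᵖ P1] [Module.Finite Bᵐᵒᵖ P1]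
    [AddCommGroup P2] [Module Bᵐᵒᵖ P2] [Module.Finite Bᵐᵒᵖ P2]
    (a0 : P0 →ₗ[Bᵐᵒᵖ] A1) (a1 : P1 →ₗ[Bᵐᵒᵖ] P0) (a2 : P2 →ₗ[Bᵐᵒᵖ] P1)
    (hproj0 : Module.Projective Bᵐᵒᵖ P0) (hproj1 : Module.Projective Bᵐᵒᵖ P1)
    (hproj2 : Module.Projective Bᵐᵒᵖ P2)
    (hinj : Injective a2) (hex2 : LinearMap.range a2 = LinearMap.ker a1)
    (hex1 : LinearMap.range a1 = LinearMap.ker a0) (hsurj : Surjective a0)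
    (hmin1 : Superfluous (LinearMap.range a1))
    (hmin2 : Superfluous (LinearMap.range a2))
    (hc : ∀ x, a1 (a2 x) = 0)
    (A2 Q0 Q1 Q2 : Type)
    [AddCommGroup A2] [Module Bᵐᵒᵖ A2] [Module.Finite Bᵐᵒᵖ A2]
    [AddCommGroup Q0] [Module Bᵐᵒᵖ Q0] [Module.Finite Bᵐᵒᵖ Q0]
    [AddCommGroup Q1] [Module Bᵐᵒᵖ Q1] [Module.Finite Bᵐᵒᵖ Q1]
    [AddCommGroup Q2] [Module Bᵐᵒᵖ Q2] [Module.Finite Bᵐᵒᵖ Q2]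
    (b0 : Q0 →ₗ[Bᵐᵒᵖ] A2) (b1 : Q1 →ₗ[Bᵐᵒᵖ] Q0) (b2 : Q2 →ₗ[Bᵐᵒᵖ] Q1)
    (hproj0' : Module.Projective Bᵐᵒᵖ Q0) (hproj1' : Module.Projective Bᵐᵒᵖ Q1)
    (hproj2' : Module.Projective Bᵐᵒᵖ Q2)
    (hinj' : Injective b2) (hex2' : LinearMap.range b2 = LinearMap.ker b1)
    (hex1' : LinearMap.range b1 = LinearMap.ker b0) (hsurj' : Surjective b0)
    (hmin1' : Superfluous (LinearMap.range b1))
    (hmin2' : Superfluous (LinearMap.range b2))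
    (hc' : ∀ x, b1 (b2 x) = 0)
    (M N : Cplx2 B) (hMp : M.Proj) (hMf : M.FinDim) (hMa : M.Acyclic)
    (hNp : N.Proj) (hNf : N.FinDim) (hNa : N.Acyclic)
    (hiso : Cplx2.Iso (M.dsum (CA a1 a2 hc)) (N.dsum (CA b1 b2 hc'))) :
    Nonempty (A1 ≃ₗ[Bᵐᵒᵖ] A2) := by
  obtain ⟨e1⟩ := Cplx2Aux.CA_H0 a0 a1 a2 hinj hex1 hsurj hc
  obtain ⟨e2⟩ := Cplx2Aux.CA_H0 b0 b1 b2 hinj' hex1' hsurj' hc'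
  obtain ⟨eM⟩ := Cplx2Aux.dsum_H0 (E := CA a1 a2 hc) hMa
  obtain ⟨eN⟩ := Cplx2Aux.dsum_H0 (E := CA b1 b2 hc') hNa
  obtain ⟨eI⟩ := Cplx2Aux.iso_H0 hiso
  exact ⟨e1.symm ≪≫ₗ eM.symm ≪≫ₗ eI ≪≫ₗ eN ≪≫ₗ e2⟩
end

section
/- Let B be a finite-dimensional algebra over k = F_q, P a finite-dimensional projective right B-module, and N• a 2-periodic complex of finite-dimensional projective right B-modules. Then every short exact sequence in C_2(mod B) of any of the forms 0 → N• → E• → K_P → 0, 0 → K_P → E• → N• → 0, 0 → N• → E• → K_P* → 0, or 0 → K_P* → E• → N• → 0 splits; equivalently, Ext^1_{C_2(mod B)}(K_P, N•) = Ext^1_{C_2(mod B)}(N•, K_P) = Ext^1_{C_2(mod B)}(K_P*, N•) = Ext^1_{C_2(mod B)}(N•, K_P*) = 0. -/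
open Function

/-- A short exact sequence of 2-periodic complexes splits if the projection
admits a section. -/
def Cplx2Ext.Splits {B : Type} [Ring B] {C D : Cplx2 B} (E : Cplx2Ext C D) : Prop :=
  ∃ s : C.Hom E.W, E.p.comp s = Cplx2.Hom.id C


/-- Every short exact sequence of 2-periodic complexes with one
end term `K_P` or `K_P*` (`P` projective) and the other end a complex of
finite-dimensional projectives splits; equivalently the corresponding `Ext¹`
groups vanish. -/
theorem ses_with_KP_splits
    (k : Type) [Field k] [Fintype k]
    (B : Type) [Ring B] [Algebra k B] [FiniteDimensional k B]
    (P : ModuleCat.{0} Bᵐᵒᵖ) (hP : Module.Projective Bᵐᵒᵖ P)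
    (hPf : Module.Finite Bᵐᵒᵖ P) (N : Cplx2 B) (hNp : N.Proj) (hNf : N.FinDim) :
    (∀ E : Cplx2Ext (KP P) N, E.Splits) ∧
    (∀ E : Cplx2Ext N (KP P), E.Splits) ∧
    (∀ E : Cplx2Ext (KPs P) N, E.Splits) ∧
    (∀ E : Cplx2Ext N (KPs P), E.Splits) := by
  constructor
  · -- 0 → N → E → K_P → 0 splits: lift id along p1 using projectivity of P
    intro E
    haveI : Module.Projective Bᵐᵒᵖ (KP P).X1 := hP
    obtain ⟨t1, ht1⟩ := Module.projective_lifting_property E.p.val.1 LinearMap.id E.surj1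
    have ht1' : ∀ x, E.p.val.1 (t1 x) = x := fun x =>
      congrFun (congrArg (fun f => f.toFun) ht1) x
    refine ⟨⟨(t1, E.W.d1 ∘ₗ t1), ⟨fun x => rfl, fun x => ?_⟩⟩, ?_⟩
    · show E.W.d0 (E.W.d1 (t1 x)) = t1 ((KP P).d0 x)
      rw [E.W.h01, show (KP P).d0 x = 0 from rfl, map_zero]
    · apply Subtype.ext
      refine Prod.ext ht1 ?_
      apply LinearMap.ext; intro x
      show E.p.val.2 (E.W.d1 (t1 x)) = x
      rw [← E.p.prop.1 (t1 x)]
      exact ht1' x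
  constructor
  · -- 0 → K_P → E → N → 0 splits
    intro E
    haveI : Module.Projective Bᵐᵒᵖ N.X1 := hNp.1
    haveI : Module.Projective Bᵐᵒᵖ N.X0 := hNp.2
    obtain ⟨t1, ht1⟩ := Module.projective_lifting_property E.p.val.1 LinearMap.id E.surj1
    obtain ⟨t0, ht0⟩ := Module.projective_lifting_property E.p.val.2 LinearMap.id E.surj0
    have ht1' : ∀ x, E.p.val.1 (t1 x) = x := fun x =>
      congrFun (congrArg (fun f => f.toFun) ht1) x
    have ht0' : ∀ x, E.p.val.2 (t0 x) = x := fun x =>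
      congrFun (congrArg (fun f => f.toFun) ht0) x
    set e0 : N.X1 →ₗ[Bᵐᵒᵖ] E.W.X0 := E.W.d1 ∘ₗ t1 - t0 ∘ₗ N.d1 with he0
    have he0' : ∀ x, e0 x = E.W.d1 (t1 x) - t0 (N.d1 x) := fun x => by rw [he0]; rfl
    have hmem : ∀ x, e0 x ∈ LinearMap.range E.i.val.2 := by
      intro x
      rw [E.ex0, LinearMap.mem_ker, he0' x, map_sub]
      rw [← E.p.prop.1 (t1 x), ht1' x, ht0' (N.d1 x)]
      exact sub_self _
    set f0 : N.X1 →ₗ[Bᵐᵒᵖ] (KP P).X0 :=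
      (LinearEquiv.ofInjective E.i.val.2 E.inj0).symm.toLinearMap ∘ₗ
        e0.codRestrict _ hmem with hf0def
    have hf0 : ∀ x, E.i.val.2 (f0 x) = e0 x := by
      intro x
      have h := (LinearEquiv.ofInjective E.i.val.2 E.inj0).apply_symm_apply
        ⟨e0 x, hmem x⟩
      exact congrArg Subtype.val h
    have hi1 : ∀ y : (KP P).X1, E.W.d1 (E.i.val.1 y) = E.i.val.2 y :=
      fun y => E.i.prop.1 y
    have hp1i1 : ∀ y : (KP P).X1, E.p.val.1 (E.i.val.1 y) = 0 := fun y => by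
      have h : E.i.val.1 y ∈ LinearMap.ker E.p.val.1 := by
        rw [← E.ex1]; exact ⟨y, rfl⟩
      exact h
    set s1 : N.X1 →ₗ[Bᵐᵒᵖ] E.W.X1 := t1 - E.i.val.1 ∘ₗ f0 with hs1
    refine ⟨⟨(s1, t0), ⟨?_, ?_⟩⟩, ?_⟩
    · intro x
      show E.W.d1 (t1 x - E.i.val.1 (f0 x)) = t0 (N.d1 x)
      rw [map_sub, (hi1 (f0 x)).trans (hf0 x), he0' x]
      abel
    · intro x
      show E.W.d0 (t0 x) = t1 (N.d0 x) - E.i.val.1 (f0 (N.d0 x))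
      have hmem1 : E.W.d0 (t0 x) - t1 (N.d0 x) ∈ LinearMap.range E.i.val.1 := by
        rw [E.ex1, LinearMap.mem_ker, map_sub]
        rw [← E.p.prop.2 (t0 x), ht0' x, ht1' (N.d0 x)]
        exact sub_self _
      obtain ⟨g, hg⟩ := hmem1
      have key : E.i.val.2 g = - E.i.val.2 (f0 (N.d0 x)) := by
        rw [← hi1 g, hg, map_sub, E.W.h10, hf0, he0' (N.d0 x), N.h10, map_zero]
        abel
      have hg' : g = - f0 (N.d0 x) := E.inj0 (by rw [key, map_neg])
      have h2 : E.W.d0 (t0 x) - t1 (N.d0 x) = - E.i.val.1 (f0 (N.d0 x)) := by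
        rw [← hg, hg']; exact map_neg _ _
      rw [sub_eq_iff_eq_add] at h2
      rw [h2]; abel
    · apply Subtype.ext
      refine Prod.ext ?_ ht0
      apply LinearMap.ext; intro x
      show E.p.val.1 (t1 x - E.i.val.1 (f0 x)) = x
      rw [map_sub, ht1' x]; exact (congrArg (x - ·) (hp1i1 (f0 x))).trans (sub_zero x)
  constructor
  · -- 0 → N → E → K_P* → 0 splits
    intro E
    haveI : Module.Projective Bᵐᵒᵖ (KPs P).X0 := hP
    obtain ⟨t0, ht0⟩ := Module.projective_lifting_property E.p.val.2 LinearMap.id E.surj0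
    have ht0' : ∀ x, E.p.val.2 (t0 x) = x := fun x =>
      congrFun (congrArg (fun f => f.toFun) ht0) x
    refine ⟨⟨(E.W.d0 ∘ₗ t0, t0), ⟨fun x => ?_, fun x => rfl⟩⟩, ?_⟩
    · show E.W.d1 (E.W.d0 (t0 x)) = t0 ((KPs P).d1 x)
      rw [E.W.h10, show (KPs P).d1 x = 0 from rfl, map_zero]
    · apply Subtype.ext
      refine Prod.ext ?_ ht0
      apply LinearMap.ext; intro x
      show E.p.val.1 (E.W.d0 (t0 x)) = x
      rw [← E.p.prop.2 (t0 x)]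
      exact ht0' x
  · -- 0 → K_P* → E → N → 0 splits
    intro E
    haveI : Module.Projective Bᵐᵒᵖ N.X1 := hNp.1
    haveI : Module.Projective Bᵐᵒᵖ N.X0 := hNp.2
    obtain ⟨t1, ht1⟩ := Module.projective_lifting_property E.p.val.1 LinearMap.id E.surj1
    obtain ⟨t0, ht0⟩ := Module.projective_lifting_property E.p.val.2 LinearMap.id E.surj0
    have ht1' : ∀ x, E.p.val.1 (t1 x) = x := fun x =>
      congrFun (congrArg (fun f => f.toFun) ht1) x
    have ht0' : ∀ x, E.p.val.2 (t0 x) = x := fun x =>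
      congrFun (congrArg (fun f => f.toFun) ht0) x
    set e1 : N.X0 →ₗ[Bᵐᵒᵖ] E.W.X1 := E.W.d0 ∘ₗ t0 - t1 ∘ₗ N.d0 with he1
    have he1' : ∀ x, e1 x = E.W.d0 (t0 x) - t1 (N.d0 x) := fun x => by rw [he1]; rfl
    have hmem : ∀ x, e1 x ∈ LinearMap.range E.i.val.1 := by
      intro x
      rw [E.ex1, LinearMap.mem_ker, he1' x, map_sub]
      rw [← E.p.prop.2 (t0 x), ht0' x, ht1' (N.d0 x)]
      exact sub_self _
    set f1 : N.X0 →ₗ[Bᵐᵒᵖ] (KPs P).X1 :=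
      (LinearEquiv.ofInjective E.i.val.1 E.inj1).symm.toLinearMap ∘ₗ
        e1.codRestrict _ hmem with hf1def
    have hf1 : ∀ x, E.i.val.1 (f1 x) = e1 x := by
      intro x
      have h := (LinearEquiv.ofInjective E.i.val.1 E.inj1).apply_symm_apply
        ⟨e1 x, hmem x⟩
      exact congrArg Subtype.val h
    have hi0 : ∀ y : (KPs P).X0, E.W.d0 (E.i.val.2 y) = E.i.val.1 y :=
      fun y => E.i.prop.2 y
    have hp0i0 : ∀ y : (KPs P).X0, E.p.val.2 (E.i.val.2 y) = 0 := fun y => by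
      have h : E.i.val.2 y ∈ LinearMap.ker E.p.val.2 := by
        rw [← E.ex0]; exact ⟨y, rfl⟩
      exact h
    set s0 : N.X0 →ₗ[Bᵐᵒᵖ] E.W.X0 := t0 - E.i.val.2 ∘ₗ f1 with hs0
    refine ⟨⟨(t1, s0), ⟨?_, ?_⟩⟩, ?_⟩
    · intro x
      show E.W.d1 (t1 x) = t0 (N.d1 x) - E.i.val.2 (f1 (N.d1 x))
      have hmem0 : E.W.d1 (t1 x) - t0 (N.d1 x) ∈ LinearMap.range E.i.val.2 := by
        rw [E.ex0, LinearMap.mem_ker, map_sub]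
        rw [← E.p.prop.1 (t1 x), ht1' x, ht0' (N.d1 x)]
        exact sub_self _
      obtain ⟨g, hg⟩ := hmem0
      have key : E.i.val.1 g = - E.i.val.1 (f1 (N.d1 x)) := by
        rw [← hi0 g, hg, map_sub, E.W.h01, hf1, he1' (N.d1 x), N.h01, map_zero]
        abel
      have hg' : g = - f1 (N.d1 x) := E.inj1 (by rw [key, map_neg])
      have h2 : E.W.d1 (t1 x) - t0 (N.d1 x) = - E.i.val.2 (f1 (N.d1 x)) := by
        rw [← hg, hg']; exact map_neg _ _
      rw [sub_eq_iff_eq_add] at h2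
      rw [h2]; abel
    · intro x
      show E.W.d0 (t0 x - E.i.val.2 (f1 x)) = t1 (N.d0 x)
      rw [map_sub, (hi0 (f1 x)).trans (hf1 x), he1' x]
      abel
    · apply Subtype.ext
      refine Prod.ext ht1 ?_
      apply LinearMap.ext; intro x
      show E.p.val.2 (t0 x - E.i.val.2 (f1 x)) = x
      rw [map_sub, ht0' x]; exact (congrArg (x - ·) (hp0i0 (f1 x))).trans (sub_zero x)
end
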